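/- arXiv:2605.29671 — 4 statements merged into one kernel-verified Lean document; each statement's English description precedes it below -/
import Mathlib

section
/- Let (μ_k)_{k∈ℕ} be a sequence of pairwise distinct points of (0,1) and let b = (b_k) ∈ ℓ². For each real λ ≥ 0 let D^λ b denote the sequence (μ_k^λ b_k)_{k∈ℕ} ∈ ℓ². Assume that the orbit (D^ℓ b)_{ℓ∈ℕ} is a frame for ℓ². Then for any sequence Λ = (λ_n)_{n∈ℕ} of non-negative real numbers, the family (D^{λ_n} b)_{n∈ℕ} is a frame for ℓ² if and only if the family of functions (t ↦ t^{λ_n})_{n∈ℕ} is a frame for L²(ν), where ν = ∑_{k≥0} (1 − μ_k²) δ_{μ_k} is the discrete measure on [0,1) with δ_x the Dirac measure at x. -/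
open MeasureTheory

noncomputable section

/-- `ℓ²`: square-summable complex sequences. -/
abbrev ell2 : Type := lp (fun _ : ℕ => ℂ) 2

/-- A family `(x i)` in a complex Hilbert space is a frame. -/
def IsFrame {H : Type*} [NormedAddCommGroup H] [InnerProductSpace ℂ H] {ι : Type*}
    (x : ι → H) : Prop :=
  ∃ A B : ℝ, 0 < A ∧ A ≤ B ∧ ∀ y : H,
    A * ‖y‖ ^ 2 ≤ ∑' i, ‖(inner ℂ y (x i) : ℂ)‖ ^ 2 ∧
    ∑' i, ‖(inner ℂ y (x i) : ℂ)‖ ^ 2 ≤ B * ‖y‖ ^ 2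

/-- The discrete measure `ν = ∑ₖ (1 − μₖ²) δ_{μₖ}` on `[0,1) ⊆ ℝ`. -/
def discMeasure (μ : ℕ → ℝ) : Measure ℝ :=
  Measure.sum fun k => ENNReal.ofReal (1 - μ k ^ 2) • Measure.dirac (μ k)

/-- The family of power functions `t ↦ t^{Λ n}` is a frame for `L²(ν)`:
`A‖f‖² ≤ ∑ₙ |⟨f, t^{Λ n}⟩_{L²(ν)}|² ≤ B‖f‖²` for every `f ∈ L²(ν)`. -/
def IsPowerFrameL2 (ν : Measure ℝ) (Λ : ℕ → ℝ) : Prop :=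
  ∃ A B : ℝ, 0 < A ∧ A ≤ B ∧ ∀ f : ℝ → ℂ, MemLp f 2 ν →
    A * (∫ t, ‖f t‖ ^ 2 ∂ν) ≤ ∑' n : ℕ, ‖∫ t, f t * ((t ^ Λ n : ℝ) : ℂ) ∂ν‖ ^ 2 ∧
    ∑' n : ℕ, ‖∫ t, f t * ((t ^ Λ n : ℝ) : ℂ) ∂ν‖ ^ 2 ≤ B * (∫ t, ‖f t‖ ^ 2 ∂ν)

namespace FracAux

section
variable {μ : ℕ → ℝ} {E : Type*} [NormedAddCommGroup E]

lemma aesm (μ : ℕ → ℝ) (g : ℝ → E) : AEStronglyMeasurable g (discMeasure μ) := by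
  rw [discMeasure, aestronglyMeasurable_sum_measure_iff]
  intro k
  refine AEStronglyMeasurable.smul_measure ?_ _
  refine ⟨fun _ => g (μ k), stronglyMeasurable_const, ?_⟩
  exact MeasureTheory.ae_eq_dirac g

lemma lintegral_disc (g : ℝ → ENNReal) :
    ∫⁻ t, g t ∂(discMeasure μ) = ∑' k, ENNReal.ofReal (1 - μ k ^ 2) * g (μ k) := by
  rw [discMeasure, MeasureTheory.lintegral_sum_measure]
  congr 1; funext k
  rw [MeasureTheory.lintegral_smul_measure, lintegral_dirac, smul_eq_mul]

lemma summable_of_integrable (hμ : ∀ k, μ k ∈ Set.Ioo (0:ℝ) 1) (g : ℝ → E)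
    (hg : Integrable g (discMeasure μ)) :
    Summable fun k => (1 - μ k ^ 2) * ‖g (μ k)‖ := by
  have h := hg.hasFiniteIntegral
  rw [hasFiniteIntegral_iff_norm, lintegral_disc] at h
  have h2 : ∀ k, ENNReal.ofReal (1 - μ k ^ 2) * ENNReal.ofReal ‖g (μ k)‖
      = ENNReal.ofReal ((1 - μ k ^ 2) * ‖g (μ k)‖) := by
    intro k
    exact (ENNReal.ofReal_mul (by nlinarith [(hμ k).1, (hμ k).2] : (0:ℝ) ≤ 1 - μ k ^ 2)).symm
  simp only [h2] at h
  have := ENNReal.summable_toReal h.ne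
  refine this.congr fun k => ?_
  rw [ENNReal.toReal_ofReal (mul_nonneg (by nlinarith [(hμ k).1, (hμ k).2]) (norm_nonneg _))]

lemma integrable_disc (hμ : ∀ k, μ k ∈ Set.Ioo (0:ℝ) 1) (g : ℝ → E)
    (h : Summable fun k => (1 - μ k ^ 2) * ‖g (μ k)‖) :
    Integrable g (discMeasure μ) := by
  refine ⟨aesm μ g, ?_⟩
  rw [hasFiniteIntegral_iff_norm, lintegral_disc]
  have h2 : ∀ k, ENNReal.ofReal (1 - μ k ^ 2) * ENNReal.ofReal ‖g (μ k)‖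
      = ENNReal.ofReal ((1 - μ k ^ 2) * ‖g (μ k)‖) := by
    intro k
    exact (ENNReal.ofReal_mul (by nlinarith [(hμ k).1, (hμ k).2] : (0:ℝ) ≤ 1 - μ k ^ 2)).symm
  simp only [h2]
  rw [← ENNReal.ofReal_tsum_of_nonneg
    (fun k => mul_nonneg (by nlinarith [(hμ k).1, (hμ k).2]) (norm_nonneg _)) h]
  exact ENNReal.ofReal_lt_top

lemma integral_disc [NormedSpace ℝ E] [CompleteSpace E] (hμ : ∀ k, μ k ∈ Set.Ioo (0:ℝ) 1)
    (g : ℝ → E) (hg : Integrable g (discMeasure μ)) :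
    ∫ t, g t ∂(discMeasure μ) = ∑' k, (1 - μ k ^ 2) • g (μ k) := by
  rw [discMeasure] at hg ⊢
  rw [MeasureTheory.integral_sum_measure hg]
  congr 1; funext k
  rw [MeasureTheory.integral_smul_measure, integral_dirac,
    ENNReal.toReal_ofReal (by nlinarith [(hμ k).1, (hμ k).2] : (0:ℝ) ≤ 1 - μ k ^ 2)]

lemma norm_sq_eq (f : ell2) : ‖f‖ ^ 2 = ∑' k, ‖f k‖ ^ 2 := by
  have := lp.norm_rpow_eq_tsum (p := 2) (by norm_num) f
  have h2 : (2:ENNReal).toReal = 2 := by norm_num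
  rw [h2] at this
  simpa only [Real.rpow_two] using this

lemma inner_eq (y x : ell2) : (inner ℂ y x : ℂ) = ∑' k, (starRingEnd ℂ) (y k) * x k := by
  rw [lp.inner_eq_tsum]; exact tsum_congr fun k => RCLike.inner_apply' _ _

lemma coe_mk (g : ∀ _ : ℕ, ℂ) (hg : Memℓp g 2) (k : ℕ) : (⟨g, hg⟩ : ell2) k = g k := rfl

lemma inner_mk (y : ell2) (g : ∀ _ : ℕ, ℂ) (hg : Memℓp g 2) :
    (inner ℂ y (⟨g, hg⟩ : ell2) : ℂ) = ∑' k, (starRingEnd ℂ) (y k) * g k := by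
  rw [inner_eq]

end
end FracAux

set_option maxHeartbeats 1000000 in
theorem fractional_orbit_frame_iff_power_frame
    (μ : ℕ → ℝ) (hμ : ∀ k, μ k ∈ Set.Ioo (0 : ℝ) 1) (hdist : Function.Injective μ)
    (b : ell2)
    (hmem : ∀ lam : ℝ, 0 ≤ lam → Memℓp (fun k => ((μ k ^ lam : ℝ) : ℂ) * b k) 2)
    (horbit : IsFrame (fun ℓ : ℕ =>
      (⟨fun k => ((μ k ^ (ℓ : ℝ) : ℝ) : ℂ) * b k, hmem _ (Nat.cast_nonneg ℓ)⟩ : ell2)))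
    (Λ : ℕ → ℝ) (hΛ : ∀ n, 0 ≤ Λ n) :
    IsFrame (fun n : ℕ =>
        (⟨fun k => ((μ k ^ Λ n : ℝ) : ℂ) * b k, hmem _ (hΛ n)⟩ : ell2)) ↔
      IsPowerFrameL2 (discMeasure μ) Λ := by
  classical
  set ν := discMeasure μ with hνdef
  set w : ℕ → ℝ := fun k => 1 - μ k ^ 2 with hwdef
  have hw0 : ∀ k, 0 < w k := fun k => by
    have h1 := (hμ k).1; have h2 := (hμ k).2; simp only [hwdef]; nlinarith
  -- Step 1: frame bounds on the orbit give `A₀ * w k ≤ ‖b k‖² ≤ B₀ * w k`.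
  obtain ⟨A₀, B₀, hA₀, hAB₀, hfr₀⟩ := horbit
  have hB₀ : 0 < B₀ := lt_of_lt_of_le hA₀ hAB₀
  have hkey : ∀ k, A₀ * w k ≤ ‖b k‖ ^ 2 ∧ ‖b k‖ ^ 2 ≤ B₀ * w k := by
    intro k
    have h1 := hfr₀ (lp.single 2 k (1:ℂ))
    have hn : ‖(lp.single 2 k (1:ℂ) : ell2)‖ = 1 := by
      have := lp.norm_single (p := 2) (E := fun _ : ℕ => ℂ) (by norm_num) k (1:ℂ)
      simpa using this
    have hinner : ∀ ℓ : ℕ,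
        (inner ℂ (lp.single 2 k (1:ℂ))
          ((⟨fun j => ((μ j ^ (ℓ : ℝ) : ℝ) : ℂ) * b j, hmem _ (Nat.cast_nonneg ℓ)⟩ : ell2)) : ℂ)
          = ((μ k ^ (ℓ : ℝ) : ℝ) : ℂ) * b k := by
      intro ℓ
      rw [lp.inner_single_left]
      simp [RCLike.inner_apply]
    have hterm : ∀ ℓ : ℕ, ‖((μ k ^ (ℓ : ℝ) : ℝ) : ℂ) * b k‖ ^ 2
        = (μ k ^ 2) ^ ℓ * ‖b k‖ ^ 2 := by
      intro ℓ
      rw [norm_mul, Complex.norm_real, Real.rpow_natCast,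
        Real.norm_of_nonneg (pow_nonneg (hμ k).1.le ℓ)]
      ring
    have hgeom : ∑' ℓ : ℕ, (μ k ^ 2) ^ ℓ = (w k)⁻¹ := by
      rw [tsum_geometric_of_lt_one (sq_nonneg _) (by nlinarith [(hμ k).1, (hμ k).2])]
    have hsum : (∑' ℓ : ℕ, ‖(inner ℂ (lp.single 2 k (1:ℂ))
          ((⟨fun j => ((μ j ^ (ℓ : ℝ) : ℝ) : ℂ) * b j, hmem _ (Nat.cast_nonneg ℓ)⟩ : ell2)) : ℂ)‖ ^ 2)
        = (w k)⁻¹ * ‖b k‖ ^ 2 := by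
      calc (∑' ℓ : ℕ, ‖(inner ℂ (lp.single 2 k (1:ℂ))
          ((⟨fun j => ((μ j ^ (ℓ : ℝ) : ℝ) : ℂ) * b j, hmem _ (Nat.cast_nonneg ℓ)⟩ : ell2)) : ℂ)‖ ^ 2)
          = ∑' ℓ : ℕ, (μ k ^ 2) ^ ℓ * ‖b k‖ ^ 2 := by
            refine tsum_congr fun ℓ => ?_
            rw [hinner ℓ, hterm ℓ]
        _ = (∑' ℓ : ℕ, (μ k ^ 2) ^ ℓ) * ‖b k‖ ^ 2 := tsum_mul_right
        _ = (w k)⁻¹ * ‖b k‖ ^ 2 := by rw [hgeom]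
    rw [hsum, hn] at h1
    have hwk := hw0 k
    constructor
    · have h := h1.1
      rw [one_pow, mul_one] at h
      have h2 := mul_le_mul_of_nonneg_right h hwk.le
      calc A₀ * w k ≤ (w k)⁻¹ * ‖b k‖ ^ 2 * w k := h2
        _ = ‖b k‖ ^ 2 := by field_simp
    · have h := h1.2
      rw [one_pow, mul_one] at h
      have h2 := mul_le_mul_of_nonneg_right h hwk.le
      calc ‖b k‖ ^ 2 = (w k)⁻¹ * ‖b k‖ ^ 2 * w k := by field_simp
        _ ≤ B₀ * w k := h2
  have hbne : ∀ k, b k ≠ 0 := by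
    intro k hzero
    have := (hkey k).1
    rw [hzero] at this
    simp at this
    nlinarith [hw0 k, hA₀]
  have hbnorm_pos : ∀ k, 0 < ‖b k‖ ^ 2 := fun k =>
    pow_pos (norm_pos_iff.mpr (hbne k)) 2
  -- b is ℓ², hence w is summable and ν is finite.
  have hb2 : Summable fun k => ‖b k‖ ^ 2 := by
    have := (lp.memℓp b).summable (p := 2) (by norm_num)
    refine this.congr fun k => ?_
    rw [← Real.rpow_natCast ‖b k‖ 2]
    norm_num
  have hwsum : Summable w := by
    refine Summable.of_nonneg_of_le (fun k => (hw0 k).le) (fun k => ?_) (hb2.mul_left (1/A₀))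
    have h := (hkey k).1
    rw [one_div, ← div_eq_inv_mul, le_div_iff₀ hA₀]
    calc w k * A₀ = A₀ * w k := mul_comm _ _
      _ ≤ ‖b k‖ ^ 2 := h
  haveI hfin : IsFiniteMeasure ν := by
    constructor
    rw [← MeasureTheory.lintegral_one, hνdef, FracAux.lintegral_disc]
    simp only [mul_one]
    rw [← ENNReal.ofReal_tsum_of_nonneg (fun k => (hw0 k).le) hwsum]
    exact ENNReal.ofReal_lt_top
  -- Generic facts about f ∈ L²(ν).
  have hIsq : ∀ f : ℝ → ℂ, MemLp f 2 ν → Integrable (fun t => ‖f t‖ ^ 2) ν := fun f hf =>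
    (memLp_two_iff_integrable_sq_norm hf.aestronglyMeasurable).mp hf
  have hsumsq : ∀ f : ℝ → ℂ, MemLp f 2 ν → Summable fun k => w k * ‖f (μ k)‖ ^ 2 := by
    intro f hf
    have := FracAux.summable_of_integrable hμ _ (hIsq f hf)
    refine this.congr fun k => ?_
    rw [Real.norm_of_nonneg (sq_nonneg _)]
  have hIval : ∀ f : ℝ → ℂ, MemLp f 2 ν →
      (∫ t, ‖f t‖ ^ 2 ∂ν) = ∑' k, w k * ‖f (μ k)‖ ^ 2 := by
    intro f hf
    rw [hνdef, FracAux.integral_disc hμ _ (hIsq f hf)]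
    exact tsum_congr fun k => smul_eq_mul _ _
  have hpow_le_one : ∀ (k : ℕ) (lam : ℝ), 0 ≤ lam → μ k ^ lam ≤ 1 := fun k lam hl =>
    Real.rpow_le_one (hμ k).1.le (hμ k).2.le hl
  have hpow_pos : ∀ (k : ℕ) (lam : ℝ), 0 < μ k ^ lam := fun k lam =>
    Real.rpow_pos_of_pos (hμ k).1 lam
  have hint_pow : ∀ (f : ℝ → ℂ), MemLp f 2 ν → ∀ n : ℕ,
      Integrable (fun t => f t * ((t ^ Λ n : ℝ) : ℂ)) ν := by
    intro f hf n
    have hf1 : Integrable f ν := hf.integrable one_le_two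
    have hs1 := FracAux.summable_of_integrable hμ _ hf1
    refine FracAux.integrable_disc hμ _ (Summable.of_nonneg_of_le
      (fun k => mul_nonneg (hw0 k).le (norm_nonneg _)) (fun k => ?_) hs1)
    rw [norm_mul, Complex.norm_real, Real.norm_of_nonneg (hpow_pos k (Λ n)).le]
    have h1 : ‖f (μ k)‖ * (μ k ^ Λ n) ≤ ‖f (μ k)‖ * 1 :=
      mul_le_mul_of_nonneg_left (hpow_le_one k (Λ n) (hΛ n)) (norm_nonneg _)
    rw [mul_one] at h1
    exact mul_le_mul_of_nonneg_left h1 (hw0 k).le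
  have hint_val : ∀ (f : ℝ → ℂ), MemLp f 2 ν → ∀ n : ℕ,
      (∫ t, f t * ((t ^ Λ n : ℝ) : ℂ) ∂ν)
        = ∑' k, ((w k : ℝ) : ℂ) * (f (μ k) * ((μ k ^ Λ n : ℝ) : ℂ)) := by
    intro f hf n
    rw [hνdef, FracAux.integral_disc hμ _ (hint_pow f hf n)]
    exact tsum_congr fun k => by rw [Complex.real_smul]
  constructor
  · -- ℓ²-frame ⟹ power frame
    rintro ⟨A, B, hA, hAB, hfr⟩
    refine ⟨A / B₀, B / A₀, div_pos hA hB₀, ?_, ?_⟩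
    · calc A / B₀ ≤ A / A₀ := by
            apply div_le_div_of_nonneg_left hA.le hA₀ hAB₀
        _ ≤ B / A₀ := (div_le_div_iff_of_pos_right hA₀).mpr hAB
    intro f hf
    set c : ℕ → ℂ := fun k => (starRingEnd ℂ) (f (μ k)) * ((w k : ℝ) : ℂ) / (starRingEnd ℂ) (b k)
      with hcdef
    have hcnorm : ∀ k, ‖c k‖ ^ 2 * ‖b k‖ ^ 2 = ‖f (μ k)‖ ^ 2 * (w k) ^ 2 := by
      intro k
      have hbq : ‖b k‖ ≠ 0 := norm_ne_zero_iff.mpr (hbne k)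
      have hck : ‖c k‖ = ‖f (μ k)‖ * w k / ‖b k‖ := by
        rw [hcdef]
        simp only [norm_div, norm_mul, RCLike.norm_conj, Complex.norm_real,
          Real.norm_of_nonneg (hw0 k).le]
      rw [hck, div_pow, div_mul_cancel₀ _ (pow_ne_zero 2 hbq), mul_pow]
    have hS1 := hsumsq f hf
    have hcle : ∀ k, ‖c k‖ ^ 2 ≤ (1 / A₀) * (w k * ‖f (μ k)‖ ^ 2) := by
      intro k
      have h := hcnorm k
      have h1 := (hkey k).1
      have h2 := hw0 k
      have h3 := hbnorm_pos k
      rw [div_mul_eq_mul_div, le_div_iff₀ hA₀] at *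
      nlinarith [sq_nonneg (‖c k‖), sq_nonneg (‖f (μ k)‖)]
    have hS2 : Summable fun k => ‖c k‖ ^ 2 :=
      Summable.of_nonneg_of_le (fun k => sq_nonneg _) hcle (hS1.mul_left (1/A₀))
    have hc2 : Memℓp c 2 := by
      apply memℓp_gen
      have : (2 : ENNReal).toReal = 2 := by norm_num
      rw [this]
      refine hS2.congr fun k => ?_
      rw [← Real.rpow_natCast ‖c k‖ 2]
      norm_num
    set y : ell2 := ⟨c, hc2⟩ with hydef
    have hynorm : ‖y‖ ^ 2 = ∑' k, ‖c k‖ ^ 2 := FracAux.norm_sq_eq y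
    have hinner : ∀ n : ℕ, (inner ℂ y
        ((⟨fun k => ((μ k ^ Λ n : ℝ) : ℂ) * b k, hmem _ (hΛ n)⟩ : ell2)) : ℂ)
        = ∫ t, f t * ((t ^ Λ n : ℝ) : ℂ) ∂ν := by
      intro n
      rw [hydef, FracAux.inner_mk, hint_val f hf n]
      refine tsum_congr fun k => ?_
      have hbq : b k ≠ 0 := hbne k
      have hck : (starRingEnd ℂ) (c k) = f (μ k) * ((w k : ℝ) : ℂ) / b k := by
        rw [hcdef]
        simp [map_div₀, map_mul, Complex.conj_conj, Complex.conj_ofReal]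
      rw [FracAux.coe_mk, hck]
      field_simp
    have hfr_y := hfr y
    set I : ℝ := ∑' k, w k * ‖f (μ k)‖ ^ 2 with hIdef
    have hIeq : (∫ t, ‖f t‖ ^ 2 ∂ν) = I := hIval f hf
    have hI0 : 0 ≤ I := tsum_nonneg fun k => mul_nonneg (hw0 k).le (sq_nonneg _)
    -- ‖y‖² bounds:  I ≤ B₀‖y‖²  and  A₀‖y‖² ≤ I
    have hlow : I ≤ B₀ * ‖y‖ ^ 2 := by
      rw [hynorm, ← tsum_mul_left]
      refine Summable.tsum_le_tsum (fun k => ?_) hS1 (hS2.mul_left B₀)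
      have h := hcnorm k
      have h1 := (hkey k).2
      have h2 := hw0 k
      have h3 := hbnorm_pos k
      nlinarith [sq_nonneg (‖c k‖), sq_nonneg (‖f (μ k)‖)]
    have hup : A₀ * ‖y‖ ^ 2 ≤ I := by
      rw [hynorm, ← tsum_mul_left]
      refine Summable.tsum_le_tsum (fun k => ?_) (hS2.mul_left A₀) hS1
      have h := hcnorm k
      have h1 := (hkey k).1
      have h2 := hw0 k
      have h3 := hbnorm_pos k
      nlinarith [sq_nonneg (‖c k‖), sq_nonneg (‖f (μ k)‖)]
    have hsum_eq : (∑' n : ℕ, ‖∫ t, f t * ((t ^ Λ n : ℝ) : ℂ) ∂ν‖ ^ 2)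
        = ∑' n : ℕ, ‖(inner ℂ y
          ((⟨fun k => ((μ k ^ Λ n : ℝ) : ℂ) * b k, hmem _ (hΛ n)⟩ : ell2)) : ℂ)‖ ^ 2 :=
      tsum_congr fun n => by rw [hinner n]
    rw [hIeq, hsum_eq]
    constructor
    · calc A / B₀ * I ≤ A / B₀ * (B₀ * ‖y‖ ^ 2) := by
            apply mul_le_mul_of_nonneg_left hlow (div_pos hA hB₀).le
        _ = A * ‖y‖ ^ 2 := by field_simp
        _ ≤ _ := hfr_y.1
    · calc (∑' n : ℕ, ‖(inner ℂ y
          ((⟨fun k => ((μ k ^ Λ n : ℝ) : ℂ) * b k, hmem _ (hΛ n)⟩ : ell2)) : ℂ)‖ ^ 2)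
          ≤ B * ‖y‖ ^ 2 := hfr_y.2
        _ = B / A₀ * (A₀ * ‖y‖ ^ 2) := by field_simp
        _ ≤ B / A₀ * I := by
            apply mul_le_mul_of_nonneg_left hup (div_pos (lt_of_lt_of_le hA hAB) hA₀).le
  · -- power frame ⟹ ℓ²-frame
    rintro ⟨A, B, hA, hAB, hfrL⟩
    refine ⟨A * A₀, B * B₀, mul_pos hA hA₀, ?_, ?_⟩
    · have hB : 0 < B := lt_of_lt_of_le hA hAB
      nlinarith
    intro y
    set f : ℝ → ℂ := Function.extend μ
      (fun k => (starRingEnd ℂ) (y k) * b k / ((w k : ℝ) : ℂ)) (fun _ => 0) with hfdef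
    have hf_apply : ∀ k, f (μ k) = (starRingEnd ℂ) (y k) * b k / ((w k : ℝ) : ℂ) := by
      intro k
      rw [hfdef]
      exact hdist.extend_apply _ _ k
    have hfnorm : ∀ k, ‖f (μ k)‖ ^ 2 * (w k) ^ 2 = ‖y k‖ ^ 2 * ‖b k‖ ^ 2 := by
      intro k
      rw [hf_apply k]
      simp only [norm_div, norm_mul, RCLike.norm_conj, Complex.norm_real,
        Real.norm_of_nonneg (hw0 k).le]
      have h2 := (hw0 k).ne'
      field_simp
    have hy2 : Summable fun k => ‖y k‖ ^ 2 := by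
      have := (lp.memℓp y).summable (p := 2) (by norm_num)
      refine this.congr fun k => ?_
      rw [← Real.rpow_natCast ‖y k‖ 2]
      norm_num
    have hsumf : Summable fun k => w k * ‖f (μ k)‖ ^ 2 := by
      refine Summable.of_nonneg_of_le
        (fun k => mul_nonneg (hw0 k).le (sq_nonneg _)) (fun k => ?_) (hy2.mul_left B₀)
      have h := hfnorm k
      have h1 := (hkey k).2
      have h2 := hw0 k
      nlinarith [sq_nonneg (‖f (μ k)‖), sq_nonneg (‖y k‖)]
    have hf2 : MemLp f 2 ν := by
      refine (memLp_two_iff_integrable_sq_norm (FracAux.aesm μ f)).mpr ?_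
      refine FracAux.integrable_disc hμ _ (hsumf.congr fun k => ?_)
      rw [Real.norm_of_nonneg (sq_nonneg _)]
    have hinner : ∀ n : ℕ, (inner ℂ y
        ((⟨fun k => ((μ k ^ Λ n : ℝ) : ℂ) * b k, hmem _ (hΛ n)⟩ : ell2)) : ℂ)
        = ∫ t, f t * ((t ^ Λ n : ℝ) : ℂ) ∂ν := by
      intro n
      rw [FracAux.inner_mk, hint_val f hf2 n]
      refine tsum_congr fun k => ?_
      rw [hf_apply k]
      have hwne : ((w k : ℝ) : ℂ) ≠ 0 := by
        simpa using (hw0 k).ne'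
      field_simp
    set I : ℝ := ∑' k, w k * ‖f (μ k)‖ ^ 2 with hIdef
    have hIeq : (∫ t, ‖f t‖ ^ 2 ∂ν) = I := hIval f hf2
    have hynorm : ‖y‖ ^ 2 = ∑' k, ‖y k‖ ^ 2 := FracAux.norm_sq_eq y
    have hlow : A₀ * ‖y‖ ^ 2 ≤ I := by
      rw [hynorm, ← tsum_mul_left]
      refine Summable.tsum_le_tsum (fun k => ?_) (hy2.mul_left A₀) hsumf
      have h := hfnorm k
      have h1 := (hkey k).1
      have h2 := hw0 k
      nlinarith [sq_nonneg (‖f (μ k)‖), sq_nonneg (‖y k‖)]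
    have hup : I ≤ B₀ * ‖y‖ ^ 2 := by
      rw [hynorm, ← tsum_mul_left]
      refine Summable.tsum_le_tsum (fun k => ?_) hsumf (hy2.mul_left B₀)
      have h := hfnorm k
      have h1 := (hkey k).2
      have h2 := hw0 k
      nlinarith [sq_nonneg (‖f (μ k)‖), sq_nonneg (‖y k‖)]
    have hfr_f := hfrL f hf2
    rw [hIeq] at hfr_f
    have hsum_eq : (∑' n : ℕ, ‖(inner ℂ y
          ((⟨fun k => ((μ k ^ Λ n : ℝ) : ℂ) * b k, hmem _ (hΛ n)⟩ : ell2)) : ℂ)‖ ^ 2)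
        = ∑' n : ℕ, ‖∫ t, f t * ((t ^ Λ n : ℝ) : ℂ) ∂ν‖ ^ 2 :=
      tsum_congr fun n => by rw [hinner n]
    rw [hsum_eq]
    constructor
    · calc A * A₀ * ‖y‖ ^ 2 = A * (A₀ * ‖y‖ ^ 2) := by ring
        _ ≤ A * I := mul_le_mul_of_nonneg_left hlow hA.le
        _ ≤ _ := hfr_f.1
    · calc (∑' n : ℕ, ‖∫ t, f t * ((t ^ Λ n : ℝ) : ℂ) ∂ν‖ ^ 2)
          ≤ B * I := hfr_f.2
        _ ≤ B * (B₀ * ‖y‖ ^ 2) :=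
            mul_le_mul_of_nonneg_left hup (lt_of_lt_of_le hA hAB).le
        _ = B * B₀ * ‖y‖ ^ 2 := by ring
end
end

section
/- For x > 0 define S(x) = ∑_{n=2}^∞ exp(−n x log n); this series converges for every x > 0. Then x S(x) → 0 as x → 0 from the right, i.e. the function x ↦ x S(x) tends to 0 along the filter of positive reals approaching 0. -/
open Filter Topology

noncomputable section

private lemma S_summable {x : ℝ} (hx : 0 < x) :
    Summable fun n : ℕ => Real.exp (-(((n : ℝ) + 2) * x * Real.log ((n : ℝ) + 2))) := by
  have hl2 : (0:ℝ) < Real.log 2 := Real.log_pos (by norm_num)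
  have hr : Real.exp (-(x * Real.log 2)) < 1 := by
    rw [Real.exp_lt_one_iff]; nlinarith
  refine Summable.of_nonneg_of_le (fun n => (Real.exp_pos _).le) (fun n => ?_)
    (summable_geometric_of_lt_one (Real.exp_pos _).le hr)
  rw [← Real.exp_nat_mul]
  apply Real.exp_le_exp.mpr
  have h2 : Real.log 2 ≤ Real.log ((n:ℝ)+2) := by
    apply Real.log_le_log (by norm_num)
    have : (0:ℝ) ≤ (n:ℝ) := n.cast_nonneg
    linarith
  have hn : (0:ℝ) ≤ (n:ℝ) := n.cast_nonneg
  nlinarith [mul_nonneg (mul_nonneg hx.le (sub_nonneg.mpr h2)) hn,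
    mul_nonneg hx.le (lt_of_lt_of_le hl2 h2).le]

private lemma S_bound {x : ℝ} (hx : 0 < x) (N : ℕ) :
    (∑' n : ℕ, Real.exp (-(((n : ℝ) + 2) * x * Real.log ((n : ℝ) + 2)))) ≤
      N + Real.exp (x * Real.log ((N:ℝ)+2)) / (x * Real.log ((N:ℝ)+2)) := by
  set c := Real.log ((N:ℝ)+2) with hc_def
  have hc : 0 < c := Real.log_pos (by
    have : (0:ℝ) ≤ (N:ℝ) := N.cast_nonneg
    linarith)
  have hxc : 0 < x * c := mul_pos hx hc
  set r := Real.exp (-(x*c)) with hr_def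
  have hr0 : 0 ≤ r := (Real.exp_pos _).le
  have hr1 : r < 1 := by rw [hr_def, Real.exp_lt_one_iff]; linarith
  have hf := S_summable hx
  rw [← hf.sum_add_tsum_nat_add N]
  have hhead : (∑ i ∈ Finset.range N,
      Real.exp (-(((i : ℝ) + 2) * x * Real.log ((i : ℝ) + 2)))) ≤ N := by
    calc (∑ i ∈ Finset.range N,
        Real.exp (-(((i : ℝ) + 2) * x * Real.log ((i : ℝ) + 2))))
        ≤ ∑ i ∈ Finset.range N, (1:ℝ) := by
          apply Finset.sum_le_sum
          intro i _
          rw [Real.exp_le_one_iff]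
          have hi : (0:ℝ) ≤ (i:ℝ) := i.cast_nonneg
          have hli : 0 ≤ Real.log ((i:ℝ)+2) := Real.log_nonneg (by linarith)
          have : 0 ≤ ((i:ℝ)+2) * x * Real.log ((i:ℝ)+2) := by positivity
          linarith
      _ = N := by simp
  have hterm : ∀ n : ℕ,
      Real.exp (-((((n + N : ℕ) : ℝ) + 2) * x * Real.log (((n + N : ℕ) : ℝ) + 2))) ≤ r ^ n := by
    intro n
    rw [hr_def, ← Real.exp_nat_mul, Real.exp_le_exp]
    push_cast
    have hn : (0:ℝ) ≤ (n:ℝ) := n.cast_nonneg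
    have hNn : (0:ℝ) ≤ (N:ℝ) := N.cast_nonneg
    have h2 : c ≤ Real.log ((n:ℝ)+(N:ℝ)+2) := by
      rw [hc_def]
      apply Real.log_le_log (by linarith)
      linarith
    have hcpos := hc
    nlinarith [mul_nonneg (mul_nonneg hx.le (sub_nonneg.mpr h2)) hn,
      mul_nonneg hx.le (lt_of_lt_of_le hc h2).le,
      mul_nonneg (mul_nonneg hNn hx.le) (lt_of_lt_of_le hc h2).le]
  have htail : (∑' n : ℕ,
      Real.exp (-((((n + N : ℕ) : ℝ) + 2) * x * Real.log (((n + N : ℕ) : ℝ) + 2)))) ≤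
      (1 - r)⁻¹ := by
    rw [← tsum_geometric_of_lt_one hr0 hr1]
    exact Summable.tsum_le_tsum hterm ((summable_nat_add_iff N).mpr hf)
      (summable_geometric_of_lt_one hr0 hr1)
  have hinv : (1 - r)⁻¹ ≤ Real.exp (x*c) / (x*c) := by
    have he : x*c + 1 ≤ Real.exp (x*c) := Real.add_one_le_exp _
    have hE : 0 < Real.exp (x*c) := Real.exp_pos _
    have h1r : 0 < 1 - r := by linarith
    have hEr : Real.exp (x*c) * r = 1 := by
      rw [hr_def, ← Real.exp_add]; simp
    rw [inv_eq_one_div, div_le_div_iff₀ h1r hxc]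
    nlinarith
  calc (∑ i ∈ Finset.range N,
        Real.exp (-(((i : ℝ) + 2) * x * Real.log ((i : ℝ) + 2)))) +
      (∑' n : ℕ,
        Real.exp (-((((n + N : ℕ) : ℝ) + 2) * x * Real.log (((n + N : ℕ) : ℝ) + 2))))
      ≤ (N:ℝ) + (1 - r)⁻¹ := add_le_add hhead htail
    _ ≤ N + Real.exp (x*c) / (x*c) := add_le_add_right hinv _

theorem xS_tendsto_zero :
    (∀ x : ℝ, 0 < x →
      Summable fun n : ℕ => Real.exp (-(((n : ℝ) + 2) * x * Real.log ((n : ℝ) + 2)))) ∧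
    Tendsto
      (fun x : ℝ =>
        x * ∑' n : ℕ, Real.exp (-(((n : ℝ) + 2) * x * Real.log ((n : ℝ) + 2))))
      (𝓝[>] (0 : ℝ)) (𝓝 0) := by
  constructor
  · exact fun x hx => S_summable hx
  rw [Metric.tendsto_nhdsWithin_nhds]
  intro ε hε
  set e := Real.exp 1 with he_def
  have he1 : 1 ≤ e := by rw [he_def]; nlinarith [Real.add_one_le_exp (1:ℝ)]
  set N := ⌈Real.exp (2 * e / ε)⌉₊ with hN_def
  have hNge : Real.exp (2 * e / ε) ≤ (N:ℝ) := Nat.le_ceil _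
  set c := Real.log ((N:ℝ)+2) with hc_def
  have hN0 : (0:ℝ) ≤ (N:ℝ) := N.cast_nonneg
  have hc2 : 2 * e / ε ≤ c := by
    rw [hc_def]
    calc 2 * e / ε = Real.log (Real.exp (2 * e / ε)) := (Real.log_exp _).symm
      _ ≤ Real.log ((N:ℝ)+2) := Real.log_le_log (Real.exp_pos _) (by linarith)
  have hc : 0 < c := lt_of_lt_of_le (by positivity) hc2
  refine ⟨min (1/c) (ε/(2*((N:ℝ)+1))), by positivity, ?_⟩
  intro x hx hdist
  have hx0 : 0 < x := hx
  rw [Real.dist_eq, sub_zero] at hdist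
  have hxδ : x < min (1/c) (ε/(2*((N:ℝ)+1))) := lt_of_abs_lt hdist
  have hx1 : x < 1/c := lt_of_lt_of_le hxδ (min_le_left _ _)
  have hx2 : x < ε/(2*((N:ℝ)+1)) := lt_of_lt_of_le hxδ (min_le_right _ _)
  have hS0 : 0 ≤ ∑' n : ℕ, Real.exp (-(((n : ℝ) + 2) * x * Real.log ((n : ℝ) + 2))) :=
    tsum_nonneg (fun n => (Real.exp_pos _).le)
  rw [Real.dist_eq, sub_zero, abs_of_nonneg (by positivity)]
  have hbound := S_bound hx0 N
  have hkey : x * (∑' n : ℕ, Real.exp (-(((n : ℝ) + 2) * x * Real.log ((n : ℝ) + 2)))) ≤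
      x * ((N:ℝ) + Real.exp (x * c) / (x * c)) :=
    mul_le_mul_of_nonneg_left hbound hx0.le
  have heq : x * ((N:ℝ) + Real.exp (x * c) / (x * c)) =
      x * (N:ℝ) + Real.exp (x * c) / c := by
    field_simp
  have hxc1 : x * c ≤ 1 := by
    have h := mul_le_mul_of_nonneg_right hx1.le hc.le
    rwa [one_div, inv_mul_cancel₀ hc.ne'] at h
  have hexp_le : Real.exp (x * c) ≤ e := by
    rw [he_def]; exact Real.exp_le_exp.mpr hxc1
  have h2 : Real.exp (x * c) / c ≤ ε / 2 := by
    have : Real.exp (x * c) / c ≤ e / c := by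
      gcongr
    have h3 : e / c ≤ ε / 2 := by
      rw [div_le_div_iff₀ hc (by norm_num : (0:ℝ) < 2)]
      have hεc : 2 * e ≤ ε * c := by
        have := (div_le_iff₀ hε).mp hc2
        linarith [mul_comm c ε]
      linarith
    linarith
  have hN1 : (0:ℝ) < (N:ℝ)+1 := by positivity
  have h1 : x * (N:ℝ) < ε / 2 := by
    have h := mul_lt_mul_of_pos_right hx2 hN1
    have heq2 : ε / (2*((N:ℝ)+1)) * ((N:ℝ)+1) = ε/2 := by field_simp
    rw [heq2] at h
    nlinarith
  calc x * (∑' n : ℕ, Real.exp (-(((n : ℝ) + 2) * x * Real.log ((n : ℝ) + 2))))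
      ≤ x * (N:ℝ) + Real.exp (x * c) / c := by rw [← heq]; exact hkey
    _ < ε/2 + ε/2 := by linarith
    _ = ε := by ring
end
end

section
/- Let (μ_k)_{k∈ℕ} be a sequence of pairwise distinct points of (0,1) with μ_k → 1, and let (λ_n)_{n≥2} be real numbers with λ_n ≥ n log n for all n ≥ 2. Then inf_{k} (1 − μ_k²) ∑_{n=2}^∞ μ_k^{2 λ_n} = 0. Consequently, with ν = ∑_{k≥0} (1 − μ_k²) δ_{μ_k} the discrete measure on [0,1), the family of functions (t ↦ t^{λ_n})_{n≥2} admits no positive lower frame bound in L²(ν): there is no constant A > 0 such that A ‖f‖²_{L²(ν)} ≤ ∑_{n≥2} |⟨f, t^{λ_n}⟩_{L²(ν)}|² for all f ∈ L²(ν). -/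
open MeasureTheory Filter Topology

noncomputable section

lemma aux_arith (x N a ε S : ℝ) (hx0 : 0 < x) (hx1 : x < 1) (hN0 : 0 < N)
    (hε : 0 < ε) (ha0 : 0 < a) (ha2 : 2 ≤ a) (hεa : 8 ≤ ε * a)
    (hbound : S ≤ N + (1 - x ^ a)⁻¹)
    (h1 : 1 - x < ε / (4 * N)) (h2 : a * (1 - x) ≤ 1) : (1 - x ^ 2) * S ≤ ε := by
  set u : ℝ := a * (1 - x) with hu
  clear_value u
  have hu0 : 0 < u := by rw [hu]; exact mul_pos ha0 (by linarith)
  have hxa0 : 0 < x ^ a := Real.rpow_pos_of_pos hx0 _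
  have hclaim : x ^ a ≤ 1 - u / 2 := by
    have hs0 : (0:ℝ) ≤ (1-x)/x := div_nonneg (by linarith) hx0.le
    have hB := one_add_mul_self_le_rpow_one_add (s := (1-x)/x) (by linarith) (p := a) (by linarith)
    have h1x : 1 + (1-x)/x = x⁻¹ := by field_simp; ring
    rw [h1x, Real.inv_rpow hx0.le] at hB
    have hs2 : 1 - x ≤ (1-x)/x := by
      rw [le_div_iff₀ hx0]; nlinarith
    have h2' : 1 + u ≤ (x^a)⁻¹ := by
      have := mul_le_mul_of_nonneg_left hs2 ha0.le
      rw [hu]; linarith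
    have h3 : x^a * (1+u) ≤ 1 := by
      have h4 := mul_le_mul_of_nonneg_left h2' hxa0.le
      rwa [mul_inv_cancel₀ hxa0.ne'] at h4
    nlinarith [h3, hu0.le, h2, hxa0.le]
  have hD : u / 2 ≤ 1 - x ^ a := by linarith
  have hD0 : 0 < 1 - x ^ a := by linarith
  have hx2 : 0 ≤ 1 - x ^ 2 := by nlinarith
  have hmain : (1 - x ^ 2) * S ≤ (1 - x ^ 2) * (N + (1 - x ^ a)⁻¹) :=
    mul_le_mul_of_nonneg_left hbound hx2
  have hA1 : (1 - x ^ 2) * N ≤ ε / 2 := by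
    have h2' : (1 - x) * (4 * N) < ε := by
      rw [← lt_div_iff₀ (by positivity)]; exact h1
    have h1x0 : (0:ℝ) ≤ 1 - x := by linarith
    have h5 : (1 - x ^ 2) * N ≤ (1 - x) * (2 * N) := by
      nlinarith [mul_nonneg (mul_nonneg h1x0 h1x0) hN0.le]
    linarith
  have hA2 : (1 - x ^ 2) * (1 - x ^ a)⁻¹ ≤ ε / 2 := by
    rw [← div_eq_mul_inv, div_le_iff₀ hD0]
    have hh1 : ε / 2 * (u / 2) ≤ ε / 2 * (1 - x ^ a) :=
      mul_le_mul_of_nonneg_left hD (by linarith)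
    have hh2 : 1 - x ^ 2 ≤ ε / 2 * (u / 2) := by
      have h1x0 : (0:ℝ) ≤ 1 - x := by linarith
      have h3 : (2:ℝ) ≤ ε * a / 4 := by linarith
      have h4 : (1 - x) * 2 ≤ (1 - x) * (ε * a / 4) :=
        mul_le_mul_of_nonneg_left h3 h1x0
      rw [hu]; nlinarith
    linarith
  calc (1 - x ^ 2) * S ≤ (1 - x ^ 2) * (N + (1 - x ^ a)⁻¹) := hmain
    _ = (1 - x ^ 2) * N + (1 - x ^ 2) * (1 - x ^ a)⁻¹ := by ring
    _ ≤ ε / 2 + ε / 2 := add_le_add hA1 hA2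
    _ = ε := by ring

lemma aux_sum_bound {x : ℝ} (hx : x ∈ Set.Ioo (0:ℝ) 1) (N : ℕ) (hN3 : 3 ≤ N)
    (lam : ℕ → ℝ) (hlam : ∀ n : ℕ, 2 ≤ n → (n : ℝ) * Real.log n ≤ lam n) :
    ∑' n : {n : ℕ // 2 ≤ n}, x ^ (2 * lam (n : ℕ)) ≤ (N : ℝ) + (1 - x ^ (2 * Real.log N))⁻¹ := by
  obtain ⟨hx0, hx1⟩ := hx
  have hNR : (3:ℝ) ≤ N := by exact_mod_cast hN3
  have hlogN : 0 < Real.log N := Real.log_pos (by linarith)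
  set r : ℝ := x ^ (2 * Real.log N) with hr
  have hr0 : 0 ≤ r := Real.rpow_nonneg hx0.le _
  have hr1 : r < 1 := Real.rpow_lt_one hx0.le hx1 (by linarith)
  set F : ℕ → ℝ := fun n => if 2 ≤ n then x ^ (2 * lam n) else 0 with hF
  set G : ℕ → ℝ := fun n => (if n < N then (1:ℝ) else 0) + r ^ n with hG
  have hFnonneg : ∀ n, 0 ≤ F n := by
    intro n; simp only [hF]
    split_ifs
    · exact Real.rpow_nonneg hx0.le _
    · exact le_refl 0
  have hFG : ∀ n, F n ≤ G n := by
    intro n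
    by_cases h2 : 2 ≤ n
    · simp only [hF, hG, if_pos h2]
      by_cases hn : n < N
      · have hl0 : 0 ≤ 2 * lam n := by
          have h1 := hlam n h2
          have h2' : (0:ℝ) ≤ (n:ℝ) * Real.log n := by
            have : (1:ℝ) ≤ (n:ℝ) := by exact_mod_cast Nat.one_le_iff_ne_zero.mpr (by omega)
            exact mul_nonneg (by linarith) (Real.log_nonneg this)
          linarith
        have h1 : x ^ (2 * lam n) ≤ 1 := Real.rpow_le_one hx0.le hx1.le hl0
        have h2' : (0:ℝ) ≤ r ^ n := pow_nonneg hr0 n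
        rw [if_pos hn]; linarith
      · push_neg at hn
        have hNn : (N:ℝ) ≤ (n:ℝ) := by exact_mod_cast hn
        have hexp : (2 * Real.log N) * n ≤ 2 * lam n := by
          have h1 := hlam n h2
          have hlog : Real.log N ≤ Real.log n := Real.log_le_log (by linarith) hNn
          have hn0 : (0:ℝ) ≤ (n:ℝ) := Nat.cast_nonneg n
          nlinarith
        have h1 : x ^ (2 * lam n) ≤ x ^ ((2 * Real.log N) * n) :=
          Real.rpow_le_rpow_of_exponent_ge hx0 hx1.le hexp
        have h2' : x ^ ((2 * Real.log N) * n) = r ^ n := by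
          rw [Real.rpow_mul hx0.le, Real.rpow_natCast]
        rw [if_neg (by omega)]
        rw [h2'] at h1; linarith
    · simp only [hF, hG, if_neg h2]
      have h2' : (0:ℝ) ≤ r ^ n := pow_nonneg hr0 n
      split_ifs <;> linarith
  have hsum1 : Summable (fun n : ℕ => if n < N then (1:ℝ) else 0) :=
    summable_of_ne_finset_zero (s := Finset.range N) (fun n hn => if_neg (by simpa using hn))
  have hsum2 : Summable (fun n : ℕ => r ^ n) := summable_geometric_of_lt_one hr0 hr1
  have hGsumm : Summable G := hsum1.add hsum2
  have hFsumm : Summable F := Summable.of_nonneg_of_le hFnonneg hFG hGsumm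
  have hgsub : Summable (fun n : {n : ℕ // 2 ≤ n} => x ^ (2 * lam (n : ℕ))) := by
    have := hFsumm.subtype {n : ℕ | 2 ≤ n}
    refine this.congr fun n => ?_
    exact if_pos n.2
  have hstep1 : ∑' n : {n : ℕ // 2 ≤ n}, x ^ (2 * lam (n : ℕ)) ≤ ∑' n, F n := by
    refine hgsub.tsum_le_tsum_of_inj (Subtype.val) Subtype.val_injective
      (fun c _ => hFnonneg c) (fun b => ?_) hFsumm
    exact le_of_eq (if_pos b.2).symm
  have hstep2 : ∑' n, F n ≤ ∑' n, G n := hFsumm.tsum_le_tsum hFG hGsumm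
  have hstep3 : ∑' n, G n = (N : ℝ) + (1 - r)⁻¹ := by
    rw [hG, hsum1.tsum_add hsum2, tsum_geometric_of_lt_one hr0 hr1]
    congr 1
    rw [tsum_eq_sum (s := Finset.range N) (fun n hn => if_neg (by simpa using hn))]
    rw [Finset.sum_congr rfl (fun n hn => if_pos (Finset.mem_range.1 hn))]
    simp
  calc ∑' n : {n : ℕ // 2 ≤ n}, x ^ (2 * lam (n : ℕ)) ≤ ∑' n, F n := hstep1
    _ ≤ ∑' n, G n := hstep2
    _ = (N : ℝ) + (1 - r)⁻¹ := hstep3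

lemma aux_key (μ : ℕ → ℝ) (hμ : ∀ k, μ k ∈ Set.Ioo (0 : ℝ) 1)
    (hlim : Tendsto μ atTop (𝓝 1))
    (lam : ℕ → ℝ) (hlam : ∀ n : ℕ, 2 ≤ n → (n : ℝ) * Real.log n ≤ lam n) :
    ∀ ε : ℝ, 0 < ε → ∃ k : ℕ,
      (1 - μ k ^ 2) * ∑' n : {n : ℕ // 2 ≤ n}, μ k ^ (2 * lam (n : ℕ)) ≤ ε := by
  intro ε hε
  obtain ⟨N, hN3, hlogN⟩ : ∃ N : ℕ, 3 ≤ N ∧ 4/ε ≤ Real.log N := by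
    refine ⟨⌈Real.exp (4/ε)⌉₊ + 3, by omega, ?_⟩
    have h1 : Real.exp (4/ε) ≤ ((⌈Real.exp (4/ε)⌉₊ + 3 : ℕ) : ℝ) := by
      calc Real.exp (4/ε) ≤ (⌈Real.exp (4/ε)⌉₊ : ℝ) := Nat.le_ceil _
        _ ≤ _ := by push_cast; linarith
    calc 4/ε = Real.log (Real.exp (4/ε)) := (Real.log_exp _).symm
      _ ≤ _ := Real.log_le_log (Real.exp_pos _) h1
  have hNR : (3:ℝ) ≤ N := by exact_mod_cast hN3
  have hN0 : (0:ℝ) < N := by linarith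
  have hlog1 : 1 ≤ Real.log N := by
    have he : Real.exp 1 ≤ (N : ℝ) := by
      have := Real.exp_one_lt_d9
      linarith
    exact (Real.le_log_iff_exp_le hN0).2 he
  have ha0 : (0:ℝ) < 2 * Real.log N := by linarith
  set δ : ℝ := min (ε/(4*N)) (1/(2 * Real.log N)) with hδdef
  have hδ : 0 < δ := lt_min (by positivity) (by positivity)
  have hδ1 : δ ≤ ε/(4*N) := min_le_left _ _
  have hδ2 : δ ≤ 1/(2 * Real.log N) := min_le_right _ _
  clear_value δ
  obtain ⟨k, hk⟩ := (hlim.eventually (eventually_gt_nhds (show 1 - δ < 1 by linarith))).exists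
  refine ⟨k, ?_⟩
  obtain ⟨hx0, hx1⟩ := hμ k
  have hbound := aux_sum_bound ⟨hx0, hx1⟩ N hN3 lam hlam
  refine aux_arith (μ k) N (2 * Real.log N) ε _ hx0 hx1 hN0 hε ha0 (by linarith) ?_ hbound
    (by linarith) ?_
  · have h4 : 4 ≤ ε * Real.log N := by
      have := (div_le_iff₀ hε).1 hlogN
      linarith
    linarith
  · have h5 : 1 - μ k ≤ 1/(2 * Real.log N) := by linarith
    calc (2 * Real.log N) * (1 - μ k) ≤ (2 * Real.log N) * (1/(2 * Real.log N)) :=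
          mul_le_mul_of_nonneg_left h5 ha0.le
      _ = 1 := by field_simp

lemma discMeasure_singleton (μ : ℕ → ℝ) (hdist : Function.Injective μ) (k₀ : ℕ) :
    discMeasure μ {μ k₀} = ENNReal.ofReal (1 - μ k₀ ^ 2) := by
  rw [discMeasure, Measure.sum_apply _ (measurableSet_singleton _)]
  rw [tsum_eq_single k₀ ?_]
  · simp [Measure.smul_apply, Measure.dirac_apply]
  · intro k hk
    have h : μ k ∉ ({μ k₀} : Set ℝ) := by
      simp only [Set.mem_singleton_iff]
      exact fun h => hk (hdist h)
    simp [Measure.smul_apply, Measure.dirac_apply, Set.indicator_of_notMem h]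

theorem no_lower_frame_bound_of_fast_exponents
    (μ : ℕ → ℝ) (hμ : ∀ k, μ k ∈ Set.Ioo (0 : ℝ) 1) (hdist : Function.Injective μ)
    (hlim : Tendsto μ atTop (𝓝 1))
    (lam : ℕ → ℝ) (hlam : ∀ n : ℕ, 2 ≤ n → (n : ℝ) * Real.log n ≤ lam n) :
    (⨅ k : ℕ, (1 - μ k ^ 2) * ∑' n : {n : ℕ // 2 ≤ n}, μ k ^ (2 * lam (n : ℕ)) = 0) ∧
    ¬ ∃ A : ℝ, 0 < A ∧ ∀ f : ℝ → ℂ, MemLp f 2 (discMeasure μ) →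
        A * (∫ t, ‖f t‖ ^ 2 ∂(discMeasure μ)) ≤
          ∑' n : {n : ℕ // 2 ≤ n},
            ‖∫ t, f t * ((t ^ lam (n : ℕ) : ℝ) : ℂ) ∂(discMeasure μ)‖ ^ 2 := by
  have hnn : ∀ k : ℕ, 0 ≤ (1 - μ k ^ 2) * ∑' n : {n : ℕ // 2 ≤ n}, μ k ^ (2 * lam (n : ℕ)) := by
    intro k
    obtain ⟨h0, h1⟩ := hμ k
    exact mul_nonneg (by nlinarith) (tsum_nonneg fun n => Real.rpow_nonneg h0.le _)
  have hbdd : BddBelow (Set.range fun k : ℕ =>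
      (1 - μ k ^ 2) * ∑' n : {n : ℕ // 2 ≤ n}, μ k ^ (2 * lam (n : ℕ))) := by
    refine ⟨0, ?_⟩
    rintro y ⟨k, rfl⟩
    exact hnn k
  have hinf : (⨅ k : ℕ, (1 - μ k ^ 2) * ∑' n : {n : ℕ // 2 ≤ n}, μ k ^ (2 * lam (n : ℕ))) = 0 := by
    refine le_antisymm ?_ (le_ciInf hnn)
    by_contra h
    push_neg at h
    obtain ⟨k, hk⟩ := aux_key μ hμ hlim lam hlam _ (half_pos h)
    have h2 := ciInf_le hbdd k
    linarith
  refine ⟨hinf, ?_⟩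
  rintro ⟨A, hA, hframe⟩
  obtain ⟨k₀, hk₀⟩ : ∃ k : ℕ,
      (1 - μ k ^ 2) * ∑' n : {n : ℕ // 2 ≤ n}, μ k ^ (2 * lam (n : ℕ)) < A := by
    by_contra h
    push_neg at h
    have h2 := le_ciInf h
    rw [hinf] at h2
    linarith
  obtain ⟨hx0, hx1⟩ := hμ k₀
  set x : ℝ := μ k₀ with hxdef
  have hx2 : 0 < 1 - x ^ 2 := by nlinarith
  have hν : discMeasure μ {x} = ENNReal.ofReal (1 - x ^ 2) := discMeasure_singleton μ hdist k₀
  have hto : (discMeasure μ {x}).toReal = 1 - x ^ 2 := by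
    rw [hν, ENNReal.toReal_ofReal hx2.le]
  have hf : MemLp (Set.indicator ({x} : Set ℝ) fun _ => (1:ℂ)) 2 (discMeasure μ) :=
    memLp_indicator_const 2 (measurableSet_singleton x) 1
      (Or.inr (by rw [hν]; exact ENNReal.ofReal_ne_top))
  have H := hframe _ hf
  have hL : (∫ t, ‖Set.indicator ({x} : Set ℝ) (fun _ => (1:ℂ)) t‖ ^ 2 ∂(discMeasure μ))
      = 1 - x ^ 2 := by
    have heq : (fun t => ‖Set.indicator ({x} : Set ℝ) (fun _ => (1:ℂ)) t‖ ^ 2)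
        = Set.indicator ({x} : Set ℝ) fun _ => (1:ℝ) := by
      funext t
      by_cases ht : t ∈ ({x} : Set ℝ)
      · simp [Set.indicator_of_mem ht]
      · simp [Set.indicator_of_notMem ht]
    rw [heq, integral_indicator_const (1:ℝ) (measurableSet_singleton x), smul_eq_mul, mul_one,
      measureReal_def, hto]
  have hR : ∀ n : {n : ℕ // 2 ≤ n},
      (∫ t, Set.indicator ({x} : Set ℝ) (fun _ => (1:ℂ)) t * ((t ^ lam (n : ℕ) : ℝ) : ℂ)
        ∂(discMeasure μ)) = (1 - x ^ 2) • ((x ^ lam (n : ℕ) : ℝ) : ℂ) := by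
    intro n
    have heq : (fun t => Set.indicator ({x} : Set ℝ) (fun _ => (1:ℂ)) t
        * ((t ^ lam (n : ℕ) : ℝ) : ℂ))
        = Set.indicator ({x} : Set ℝ) fun _ => ((x ^ lam (n : ℕ) : ℝ) : ℂ) := by
      funext t
      rcases eq_or_ne t x with rfl | ht
      · simp [Set.indicator_of_mem]
      · simp [Set.indicator_of_notMem, ht]
    rw [heq, integral_indicator_const _ (measurableSet_singleton x), measureReal_def, hto]
  have hsummand : ∀ n : {n : ℕ // 2 ≤ n},
      ‖∫ t, Set.indicator ({x} : Set ℝ) (fun _ => (1:ℂ)) t * ((t ^ lam (n : ℕ) : ℝ) : ℂ)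
        ∂(discMeasure μ)‖ ^ 2 = (1 - x ^ 2) ^ 2 * x ^ (2 * lam (n : ℕ)) := by
    intro n
    rw [hR n, norm_smul, Real.norm_eq_abs, abs_of_nonneg hx2.le, Complex.norm_real,
      Real.norm_eq_abs, abs_of_nonneg (Real.rpow_nonneg hx0.le _)]
    have h2 : x ^ (2 * lam (n : ℕ)) = x ^ lam (n : ℕ) * x ^ lam (n : ℕ) := by
      rw [two_mul, Real.rpow_add hx0]
    rw [h2]; ring
  rw [hL] at H
  rw [tsum_congr hsummand] at H
  have hts : ∑' n : {n : ℕ // 2 ≤ n}, (1 - x ^ 2) ^ 2 * x ^ (2 * lam (n : ℕ))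
      = (1 - x ^ 2) ^ 2 * ∑' n : {n : ℕ // 2 ≤ n}, x ^ (2 * lam (n : ℕ)) := tsum_mul_left
  rw [hts] at H
  nlinarith [mul_lt_mul_of_pos_left hk₀ hx2, H]
end
end

section
/- (Bourdon–Narayan) Let φ : 𝔻 → 𝔻 and u : 𝔻 → ℂ be holomorphic with u not identically zero, and suppose W : ℓ² → ℓ² is a continuous linear map satisfying f_{Wa}(z) = u(z) · f_a(φ(z)) for all a ∈ ℓ² and all z ∈ 𝔻. Then W is a unitary operator on ℓ² if and only if φ is a holomorphic automorphism of 𝔻 and there exist p ∈ 𝔻 with φ(p) = 0 and c ∈ ℂ with |c| = 1 such that u(z) = c √(1 − |p|²) / (1 − conj(p) z) for all z ∈ 𝔻 (that is, u = c K_p/‖K_p‖ where K_p(z) = 1/(1 − conj(p) z) is the reproducing kernel of H²(𝔻) at p and ‖K_p‖ = (1 − |p|²)^{−1/2}). -/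
open Metric

noncomputable section

/-- `f_a(z) = ∑ aₙ zⁿ` for `a ∈ ℓ²`. -/
def hardyFun (a : ell2) (z : ℂ) : ℂ := ∑' n : ℕ, a n * z ^ n

lemma memlp_kern {z : ℂ} (hz : ‖z‖ < 1) : Memℓp (fun n : ℕ => (starRingEnd ℂ) z ^ n) 2 := by
  apply memℓp_gen
  have : Summable (fun n : ℕ => (‖z‖ ^ 2) ^ n) :=
    summable_geometric_of_lt_one (by positivity) (by nlinarith [norm_nonneg z])
  convert this using 2 with n
  simp [← pow_mul, ← pow_mul, mul_comm, norm_pow]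

def kern (z : ℂ) : ell2 :=
  if h : ‖z‖ < 1 then ⟨fun n : ℕ => (starRingEnd ℂ) z ^ n, memlp_kern h⟩ else 0

lemma kern_apply {z : ℂ} (hz : ‖z‖ < 1) (n : ℕ) : kern z n = (starRingEnd ℂ) z ^ n := by
  rw [kern, dif_pos hz]

lemma summable_coeff (a : ell2) {z : ℂ} (hz : ‖z‖ < 1) :
    Summable (fun n : ℕ => a n * z ^ n) := by
  apply Summable.of_norm
  apply Summable.of_nonneg_of_le (fun n => norm_nonneg _)
    (fun n => ?_) (Summable.mul_left ‖a‖ (summable_geometric_of_lt_one (norm_nonneg z) hz))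
  rw [norm_mul, norm_pow]
  exact mul_le_mul_of_nonneg_right (lp.norm_apply_le_norm (by norm_num) a n) (by positivity)

lemma inner_kern_left {z : ℂ} (hz : ‖z‖ < 1) (a : ell2) :
    (inner ℂ (kern z) a : ℂ) = hardyFun a z := by
  rw [lp.inner_eq_tsum, hardyFun]
  congr 1 with n
  rw [kern_apply hz, RCLike.inner_apply]
  simp [mul_comm]

lemma inner_kern_kern {z w : ℂ} (hz : ‖z‖ < 1) (hw : ‖w‖ < 1) :
    (inner ℂ (kern z) (kern w) : ℂ) = (1 - z * (starRingEnd ℂ) w)⁻¹ := by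
  rw [lp.inner_eq_tsum]
  have h1 : ‖z * (starRingEnd ℂ) w‖ < 1 := by
    rw [norm_mul, RCLike.norm_conj]; nlinarith [norm_nonneg z, norm_nonneg w]
  rw [← tsum_geometric_of_norm_lt_one h1]
  congr 1 with n
  rw [kern_apply hz, kern_apply hw, RCLike.inner_apply]
  simp [mul_pow, mul_comm]

lemma one_sub_ne {z w : ℂ} (hz : ‖z‖ < 1) (hw : ‖w‖ < 1) : 1 - z * w ≠ 0 := by
  intro h
  have : z * w = 1 := by linear_combination -h
  have := congrArg norm this
  rw [norm_mul, norm_one] at this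
  nlinarith [norm_nonneg z, norm_nonneg w]

lemma hardy_series (a : ell2) :
    HasFPowerSeriesOnBall (hardyFun a) (FormalMultilinearSeries.ofScalars ℂ (fun n => a n)) 0 1 := by
  refine ⟨?_, by norm_num, ?_⟩
  · have h1 : (1 : ENNReal) = ((1 : NNReal) : ENNReal) := by norm_num
    rw [h1]
    apply FormalMultilinearSeries.le_radius_of_bound _ ‖a‖ (fun n => ?_)
    rw [FormalMultilinearSeries.ofScalars_norm]
    simpa using lp.norm_apply_le_norm (by norm_num) a n
  · intro y hy
    simp only [EMetric.mem_ball, edist_zero_right] at hy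
    have hy1 : ‖y‖ < 1 := by
      simpa [← ENNReal.coe_one, ENNReal.coe_lt_coe, ← NNReal.coe_lt_coe] using hy
    have hs := summable_coeff a hy1
    have heq : ∀ n, (FormalMultilinearSeries.ofScalars ℂ (fun n => a n) n) (fun _ => y)
        = a n * y ^ n := by
      intro n
      rw [FormalMultilinearSeries.ofScalars_apply_eq]
      simp [smul_eq_mul]
    simp only [heq, zero_add]
    exact hs.hasSum

lemma eq_zero_of_hardy_eq_zero {a : ell2} (h : ∀ z ∈ ball (0 : ℂ) 1, hardyFun a z = 0) :
    a = 0 := by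
  have h1 := (hardy_series a).hasFPowerSeriesAt
  have h2 : HasFPowerSeriesAt (fun _ : ℂ => (0 : ℂ))
      (FormalMultilinearSeries.ofScalars ℂ (fun n => a n)) 0 := by
    apply h1.congr
    filter_upwards [Metric.ball_mem_nhds (0 : ℂ) one_pos] with z hz
    exact h z hz
  have h3 : HasFPowerSeriesAt (fun _ : ℂ => (0 : ℂ)) (0 : FormalMultilinearSeries ℂ ℂ ℂ) 0 := by
    refine ⟨1, ?_, by norm_num, ?_⟩
    · simp [FormalMultilinearSeries.radius_eq_top_of_forall_image_add_eq_zero (0 : FormalMultilinearSeries ℂ ℂ ℂ) 0 (fun n => rfl)]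
    · intro y _
      simpa using hasSum_zero
  have heq := h2.eq_formalMultilinearSeries h3
  have h4 : (fun n => (a n : ℂ)) = 0 := by
    rwa [FormalMultilinearSeries.ofScalars_series_eq_zero] at heq
  ext n
  exact congrFun h4 n

open ContinuousLinearMap in
lemma adj_kern {φ u : ℂ → ℂ} {W : ell2 →L[ℂ] ell2}
    (hφm : Set.MapsTo φ (ball (0 : ℂ) 1) (ball (0 : ℂ) 1))
    (hW : ∀ a : ell2, ∀ z ∈ ball (0 : ℂ) 1, hardyFun (W a) z = u z * hardyFun a (φ z))
    {z : ℂ} (hz : z ∈ ball (0 : ℂ) 1) :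
    adjoint W (kern z) = (starRingEnd ℂ) (u z) • kern (φ z) := by
  apply ext_inner_right ℂ
  intro a
  rw [adjoint_inner_left, inner_smul_left]
  have hz1 : ‖z‖ < 1 := by simpa [mem_ball, dist_eq_norm] using hz
  have hφz : ‖φ z‖ < 1 := by simpa [mem_ball, dist_eq_norm] using hφm hz
  rw [inner_kern_left hz1, inner_kern_left hφz, hW a z hz]
  simp

lemma normSq_moebius_key (p z : ℂ) :
    ((Complex.normSq (1 - (starRingEnd ℂ) p * z) : ℂ)) - (Complex.normSq (p - z) : ℂ)
      = (1 - Complex.normSq p) * (1 - Complex.normSq z) := by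
  rw [← Complex.mul_conj, ← Complex.mul_conj, ← Complex.mul_conj, ← Complex.mul_conj]
  simp only [map_sub, map_mul, map_one, Complex.conj_conj]
  push_cast
  ring

lemma moebius_lt_one {p z : ℂ} (hp : ‖p‖ < 1) (hz : ‖z‖ < 1) :
    ‖(p - z) / (1 - (starRingEnd ℂ) p * z)‖ < 1 := by
  have hD : (1 - (starRingEnd ℂ) p * z) ≠ 0 :=
    one_sub_ne (by rwa [RCLike.norm_conj]) hz
  have hkey : Complex.normSq (1 - (starRingEnd ℂ) p * z) - Complex.normSq (p - z)
      = (1 - Complex.normSq p) * (1 - Complex.normSq z) := by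
    have := normSq_moebius_key p z
    exact_mod_cast this
  have hp2 : Complex.normSq p < 1 := by
    rw [Complex.normSq_eq_norm_sq]; nlinarith [norm_nonneg p, hp]
  have hz2 : Complex.normSq z < 1 := by
    rw [Complex.normSq_eq_norm_sq]; nlinarith [norm_nonneg z, hz]
  have hlt : Complex.normSq (p - z) < Complex.normSq (1 - (starRingEnd ℂ) p * z) := by nlinarith
  rw [norm_div, div_lt_one (by simpa [norm_pos_iff] using hD)]
  have h1 : ‖p - z‖ ^ 2 < ‖1 - (starRingEnd ℂ) p * z‖ ^ 2 := by
    rw [Complex.sq_norm, Complex.sq_norm]; exact hlt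
  exact lt_of_pow_lt_pow_left₀ 2 (norm_nonneg _) h1

open ContinuousLinearMap in
lemma forward_dir {φ u : ℂ → ℂ} {W : ell2 →L[ℂ] ell2}
    (hφm : Set.MapsTo φ (ball (0 : ℂ) 1) (ball (0 : ℂ) 1))
    (hW : ∀ a : ell2, ∀ z ∈ ball (0 : ℂ) 1, hardyFun (W a) z = u z * hardyFun a (φ z))
    (hinner : ∀ a b : ell2, (inner ℂ (W a) (W b) : ℂ) = inner ℂ a b)
    (hsurj : Function.Surjective W) :
    ((∃ ψ : ℂ → ℂ, DifferentiableOn ℂ ψ (ball (0 : ℂ) 1) ∧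
        Set.MapsTo ψ (ball (0 : ℂ) 1) (ball (0 : ℂ) 1) ∧
        (∀ z ∈ ball (0 : ℂ) 1, ψ (φ z) = z) ∧
        (∀ z ∈ ball (0 : ℂ) 1, φ (ψ z) = z)) ∧
     ∃ p : ℂ, ∃ c : ℂ, ‖p‖ < 1 ∧ φ p = 0 ∧ ‖c‖ = 1 ∧
       ∀ z ∈ ball (0 : ℂ) 1,
         u z = c * (Real.sqrt (1 - ‖p‖ ^ 2) : ℝ) / (1 - (starRingEnd ℂ) p * z)) := by
  have hmem : ∀ z : ℂ, z ∈ ball (0:ℂ) 1 ↔ ‖z‖ < 1 := by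
    intro z; simp [mem_ball, dist_eq_norm]
  -- W† W = 1 and W W† = 1
  have hWtW : ∀ a : ell2, adjoint W (W a) = a := by
    intro a
    apply ext_inner_right ℂ
    intro b
    rw [adjoint_inner_left]
    exact hinner a b
  have hWWt : ∀ x : ell2, W (adjoint W x) = x := by
    intro x
    obtain ⟨a, rfl⟩ := hsurj x
    rw [hWtW]
  -- the fundamental scalar identity
  have hstar : ∀ z ∈ ball (0:ℂ) 1, ∀ w ∈ ball (0:ℂ) 1,
      u z * (starRingEnd ℂ) (u w) * (1 - z * (starRingEnd ℂ) w)
        = 1 - φ z * (starRingEnd ℂ) (φ w) := by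
    intro z hz w hw
    have hz1 : ‖z‖ < 1 := (hmem z).1 hz
    have hw1 : ‖w‖ < 1 := (hmem w).1 hw
    have hφz : ‖φ z‖ < 1 := (hmem _).1 (hφm hz)
    have hφw : ‖φ w‖ < 1 := (hmem _).1 (hφm hw)
    have hkey : (inner ℂ (adjoint W (kern z)) (adjoint W (kern w)) : ℂ)
        = inner ℂ (kern z) (kern w) := by
      rw [adjoint_inner_left, hWWt]
    rw [adj_kern hφm hW hz, adj_kern hφm hW hw, inner_smul_left, inner_smul_right,
      inner_kern_kern hφz hφw, inner_kern_kern hz1 hw1] at hkey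
    simp only [Complex.conj_conj] at hkey
    have hD1 : (1 : ℂ) - φ z * (starRingEnd ℂ) (φ w) ≠ 0 :=
      one_sub_ne hφz (by rwa [RCLike.norm_conj])
    have hD2 : (1 : ℂ) - z * (starRingEnd ℂ) w ≠ 0 :=
      one_sub_ne hz1 (by rwa [RCLike.norm_conj])
    field_simp at hkey
    linear_combination hkey
  -- notation
  set a := φ 0 with ha
  have h0mem : (0:ℂ) ∈ ball (0:ℂ) 1 := by simp
  have han : ‖a‖ < 1 := (hmem a).1 (hφm h0mem)
  have h4 : u 0 * (starRingEnd ℂ) (u 0) = 1 - a * (starRingEnd ℂ) a := by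
    have := hstar 0 h0mem 0 h0mem
    simpa using this
  have hu0 : u 0 ≠ 0 := by
    intro h
    rw [h] at h4
    exact one_sub_ne han (by rwa [RCLike.norm_conj]) (by linear_combination -h4)
  have hA : ∀ z ∈ ball (0:ℂ) 1, u z * (starRingEnd ℂ) (u 0) = 1 - φ z * (starRingEnd ℂ) a := by
    intro z hz
    have := hstar z hz 0 h0mem
    simpa using this
  have hAc : ∀ w ∈ ball (0:ℂ) 1,
      (starRingEnd ℂ) (u w) * u 0 = 1 - (starRingEnd ℂ) (φ w) * a := by
    intro w hw
    have := congrArg (starRingEnd ℂ) (hA w hw)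
    simpa using this
  -- the Möbius identity
  have hdag : ∀ z ∈ ball (0:ℂ) 1, ∀ w ∈ ball (0:ℂ) 1,
      (1 - φ z * (starRingEnd ℂ) (φ w)) * (u 0 * (starRingEnd ℂ) (u 0))
        = (1 - φ z * (starRingEnd ℂ) a) * (1 - (starRingEnd ℂ) (φ w) * a)
          * (1 - z * (starRingEnd ℂ) w) := by
    intro z hz w hw
    rw [← hA z hz, ← hAc w hw]
    linear_combination (-(u 0 * (starRingEnd ℂ) (u 0))) * hstar z hz w hw
  have hτ : ∀ z ∈ ball (0:ℂ) 1, ∀ w ∈ ball (0:ℂ) 1,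
      (a - φ z) * ((starRingEnd ℂ) a - (starRingEnd ℂ) (φ w))
        = z * (starRingEnd ℂ) w
          * ((1 - (starRingEnd ℂ) a * φ z) * (1 - a * (starRingEnd ℂ) (φ w))) := by
    intro z hz w hw
    linear_combination -hdag z hz w hw + (1 - φ z * (starRingEnd ℂ) (φ w)) * h4
  -- extract the rotation λ
  have hhalf : (1/2 : ℂ) ∈ ball (0:ℂ) 1 := by
    rw [hmem]; simp; norm_num
  have hDen : ∀ z ∈ ball (0:ℂ) 1, (1 : ℂ) - (starRingEnd ℂ) a * φ z ≠ 0 := by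
    intro z hz
    exact one_sub_ne (by rwa [RCLike.norm_conj]) ((hmem _).1 (hφm hz))
  set τ : ℂ → ℂ := fun z => (a - φ z) / (1 - (starRingEnd ℂ) a * φ z) with hτdef
  have hτdiv : ∀ z ∈ ball (0:ℂ) 1, τ z * (starRingEnd ℂ) (τ (1/2)) = z * (1/2) := by
    intro z hz
    have h1 := hτ z hz (1/2) hhalf
    have hd1 := hDen z hz
    have hd2 := hDen (1/2) hhalf
    have hd2' : (1 : ℂ) - a * (starRingEnd ℂ) (φ (1/2)) ≠ 0 := by
      intro h
      apply hd2
      have := congrArg (starRingEnd ℂ) h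
      simpa [mul_comm] using this
    rw [hτdef]
    simp only [map_div₀, map_sub, map_mul, map_one, Complex.conj_conj]
    rw [div_mul_div_comm, div_eq_iff (by exact mul_ne_zero hd1 hd2')]
    have hc : (starRingEnd ℂ) ((1:ℂ)/2) = 1/2 := by rw [map_div₀, map_one, map_ofNat]
    rw [hc] at h1
    linear_combination h1
  have hτh : τ (1/2) * (starRingEnd ℂ) (τ (1/2)) = (1/2) * (1/2) := by
    simpa using hτdiv (1/2) hhalf
  have hτne : (starRingEnd ℂ) (τ (1/2)) ≠ 0 := by
    intro h
    rw [h, mul_zero] at hτh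
    norm_num at hτh
  set lam : ℂ := (1/2) / (starRingEnd ℂ) (τ (1/2)) with hlamdef
  have hlamτ : ∀ z ∈ ball (0:ℂ) 1, τ z = lam * z := by
    intro z hz
    rw [hlamdef, div_mul_eq_mul_div, eq_div_iff hτne, mul_comm ((1:ℂ)/2) z]
    exact hτdiv z hz
  have hτnorm : ‖τ (1/2)‖ = 1/2 := by
    have h1 : (Complex.normSq (τ (1/2)) : ℂ) = ((1/4 : ℝ) : ℂ) := by
      rw [← Complex.mul_conj]
      rw [hτh]; norm_num
    have h2 : Complex.normSq (τ (1/2)) = 1/4 := by exact_mod_cast h1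
    rw [Complex.norm_def, h2]
    rw [show (1/4 : ℝ) = (1/2)^2 by norm_num, Real.sqrt_sq (by norm_num)]
  have hlamnorm : ‖lam‖ = 1 := by
    rw [hlamdef, norm_div, RCLike.norm_conj, hτnorm]
    norm_num
  have hlamconj : lam * (starRingEnd ℂ) lam = 1 := by
    rw [Complex.mul_conj]
    rw [Complex.normSq_eq_norm_sq, hlamnorm]
    norm_num
  -- explicit formula for φ
  have hφf : ∀ z ∈ ball (0:ℂ) 1,
      φ z * (1 - (starRingEnd ℂ) a * lam * z) = a - lam * z := by
    intro z hz
    have h1 := hlamτ z hz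
    rw [hτdef] at h1
    rw [div_eq_iff (hDen z hz)] at h1
    linear_combination -h1
  -- the point p and the inverse map ψ
  set p : ℂ := (starRingEnd ℂ) lam * a with hpdef
  have hpa : ‖p‖ = ‖a‖ := by
    rw [hpdef, norm_mul, RCLike.norm_conj, hlamnorm, one_mul]
  have hpn : ‖p‖ < 1 := by rw [hpa]; exact han
  have hpmem : p ∈ ball (0:ℂ) 1 := (hmem p).2 hpn
  have hlp : lam * p = a := by
    rw [hpdef]
    linear_combination a * hlamconj
  have hφp : φ p = 0 := by
    have h1 := hφf p hpmem
    have hden : (1:ℂ) - (starRingEnd ℂ) a * lam * p = 1 - a * (starRingEnd ℂ) a := by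
      linear_combination (-(starRingEnd ℂ) a) * hlp
    rw [hden] at h1
    have h2 : a - lam * p = 0 := by rw [hlp]; ring
    rw [h2] at h1
    have hne : (1:ℂ) - a * (starRingEnd ℂ) a ≠ 0 :=
      one_sub_ne han (by rwa [RCLike.norm_conj])
    exact (mul_eq_zero.1 h1).resolve_right hne
  set ψ : ℂ → ℂ := fun z => (starRingEnd ℂ) lam * ((a - z) / (1 - (starRingEnd ℂ) a * z))
    with hψdef
  have hψdiff : DifferentiableOn ℂ ψ (ball (0:ℂ) 1) := by
    apply DifferentiableOn.const_mul
    apply DifferentiableOn.div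
    · exact (differentiable_const a).differentiableOn.sub differentiable_id.differentiableOn
    · exact ((differentiable_const (1:ℂ)).differentiableOn.sub
        ((differentiable_id.const_mul _).differentiableOn))
    · intro z hz
      exact one_sub_ne (by rwa [RCLike.norm_conj]) ((hmem z).1 hz)
  have hψmaps : Set.MapsTo ψ (ball (0:ℂ) 1) (ball (0:ℂ) 1) := by
    intro z hz
    rw [hmem, hψdef]
    simp only [norm_mul, RCLike.norm_conj, hlamnorm, one_mul]
    exact moebius_lt_one han ((hmem z).1 hz)
  have hψφ : ∀ z ∈ ball (0:ℂ) 1, ψ (φ z) = z := by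
    intro z hz
    have h1 : ψ (φ z) = (starRingEnd ℂ) lam * τ z := by rw [hψdef, hτdef]
    rw [h1, hlamτ z hz]
    linear_combination z * hlamconj
  have hφψ : ∀ z ∈ ball (0:ℂ) 1, φ (ψ z) = z := by
    intro z hz
    have hz1 : ‖z‖ < 1 := (hmem z).1 hz
    set s : ℂ := (a - z) / (1 - (starRingEnd ℂ) a * z) with hsdef
    have hsnorm : ‖s‖ < 1 := by rw [hsdef]; exact moebius_lt_one han hz1
    have hψz : ψ z = (starRingEnd ℂ) lam * s := by rw [hψdef]
    have hψmem : ψ z ∈ ball (0:ℂ) 1 := hψmaps hz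
    have e1 : lam * ψ z = s := by
      rw [hψz]
      linear_combination s * hlamconj
    have h1 := hφf (ψ z) hψmem
    have hzne : (1:ℂ) - (starRingEnd ℂ) a * z ≠ 0 :=
      one_sub_ne (by rwa [RCLike.norm_conj]) hz1
    have hsne : (1:ℂ) - (starRingEnd ℂ) a * s ≠ 0 :=
      one_sub_ne (by rwa [RCLike.norm_conj]) hsnorm
    have hs' : s * (1 - (starRingEnd ℂ) a * z) = a - z := by
      rw [hsdef]; exact div_mul_cancel₀ _ hzne
    apply mul_right_cancel₀ (mul_ne_zero hsne hzne)
    linear_combination (1 - (starRingEnd ℂ) a * z) * h1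
      + (1 - (starRingEnd ℂ) a * z) * (φ (ψ z) * (starRingEnd ℂ) a - 1) * e1
      - (1 - (starRingEnd ℂ) a * z) * hs'
  -- the constant c and the formula for u
  have hspos : (0:ℝ) < 1 - ‖a‖^2 := by nlinarith [norm_nonneg a]
  have hsqrtpos : (0:ℝ) < Real.sqrt (1 - ‖a‖^2) := Real.sqrt_pos.2 hspos
  have haa : a * (starRingEnd ℂ) a = ((‖a‖^2 : ℝ) : ℂ) := by
    rw [Complex.mul_conj, Complex.normSq_eq_norm_sq]
  have hX : (((1 - ‖a‖^2 : ℝ)) : ℂ) = 1 - a * (starRingEnd ℂ) a := by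
    rw [Complex.ofReal_sub, Complex.ofReal_one, haa]
  have hu0norm : ‖u 0‖ = Real.sqrt (1 - ‖a‖^2) := by
    have h1 : (Complex.normSq (u 0) : ℂ) = (((1 - ‖a‖^2 : ℝ)) : ℂ) := by
      rw [← Complex.mul_conj, h4, ← hX]
    have h2 : Complex.normSq (u 0) = 1 - ‖a‖^2 := by exact_mod_cast h1
    rw [Complex.norm_def, h2]
  set c : ℂ := ((Real.sqrt (1 - ‖a‖^2) : ℝ) : ℂ) / (starRingEnd ℂ) (u 0) with hcdef
  have hu0c : (starRingEnd ℂ) (u 0) ≠ 0 := by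
    intro h
    apply hu0
    rw [← Complex.conj_conj (u 0), h, map_zero]
  have hcnorm : ‖c‖ = 1 := by
    rw [hcdef, norm_div, RCLike.norm_conj, hu0norm, Complex.norm_real,
      Real.norm_eq_abs, abs_of_pos hsqrtpos, div_self hsqrtpos.ne']
  have hcp : (starRingEnd ℂ) p = lam * (starRingEnd ℂ) a := by
    rw [hpdef, map_mul, Complex.conj_conj]
  refine ⟨⟨ψ, hψdiff, hψmaps, hψφ, hφψ⟩, p, c, hpn, hφp, hcnorm, ?_⟩
  intro z hz
  have hz1 : ‖z‖ < 1 := (hmem z).1 hz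
  have hdenp : (1:ℂ) - (starRingEnd ℂ) p * z ≠ 0 :=
    one_sub_ne (by rwa [RCLike.norm_conj]) hz1
  have key : u z * (starRingEnd ℂ) (u 0) * (1 - (starRingEnd ℂ) p * z)
      = (((1 - ‖a‖^2 : ℝ)) : ℂ) := by
    rw [hcp, hX]
    linear_combination (1 - lam * (starRingEnd ℂ) a * z) * hA z hz
      - (starRingEnd ℂ) a * hφf z hz
  have hsq : ((Real.sqrt (1 - ‖a‖^2) : ℝ) : ℂ) * ((Real.sqrt (1 - ‖a‖^2) : ℝ) : ℂ)
      = (((1 - ‖a‖^2 : ℝ)) : ℂ) := by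
    rw [← Complex.ofReal_mul, Real.mul_self_sqrt hspos.le]
  rw [hpa, hcdef, div_mul_eq_mul_div, div_div, eq_div_iff (mul_ne_zero hu0c hdenp)]
  linear_combination key - hsq

lemma moebius_invol {p z : ℂ} (hp : ‖p‖ < 1) (hz : ‖z‖ < 1) :
    (p - (p - z) / (1 - (starRingEnd ℂ) p * z))
      / (1 - (starRingEnd ℂ) p * ((p - z) / (1 - (starRingEnd ℂ) p * z))) = z := by
  have d1 : (1:ℂ) - (starRingEnd ℂ) p * z ≠ 0 := one_sub_ne (by rwa [RCLike.norm_conj]) hz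
  have hσ : ‖(p - z) / (1 - (starRingEnd ℂ) p * z)‖ < 1 := moebius_lt_one hp hz
  set s : ℂ := (p - z) / (1 - (starRingEnd ℂ) p * z) with hsdef
  have d2 : (1:ℂ) - (starRingEnd ℂ) p * s ≠ 0 := one_sub_ne (by rwa [RCLike.norm_conj]) hσ
  have h : s * (1 - (starRingEnd ℂ) p * z) = p - z := div_mul_cancel₀ _ d1
  rw [div_eq_iff d2]
  apply mul_right_cancel₀ d1
  linear_combination (z * (starRingEnd ℂ) p - 1) * h

lemma schwarz_rigid {φ ψ : ℂ → ℂ} {p : ℂ}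
    (hφd : DifferentiableOn ℂ φ (ball (0 : ℂ) 1))
    (hφm : Set.MapsTo φ (ball (0 : ℂ) 1) (ball (0 : ℂ) 1))
    (hψd : DifferentiableOn ℂ ψ (ball (0 : ℂ) 1))
    (hψm : Set.MapsTo ψ (ball (0 : ℂ) 1) (ball (0 : ℂ) 1))
    (hψφ : ∀ z ∈ ball (0 : ℂ) 1, ψ (φ z) = z)
    (hp : ‖p‖ < 1) (hφp : φ p = 0) :
    ∃ lam : ℂ, ‖lam‖ = 1 ∧ ∀ z ∈ ball (0 : ℂ) 1,
      φ z * (1 - (starRingEnd ℂ) p * z) = lam * (p - z) := by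
  have hmem : ∀ z : ℂ, z ∈ ball (0:ℂ) 1 ↔ ‖z‖ < 1 := by
    intro z; simp [mem_ball, dist_eq_norm]
  set σ : ℂ → ℂ := fun z => (p - z) / (1 - (starRingEnd ℂ) p * z) with hσdef
  have hσd : DifferentiableOn ℂ σ (ball (0:ℂ) 1) := by
    apply DifferentiableOn.div
    · exact (differentiable_const p).differentiableOn.sub differentiable_id.differentiableOn
    · exact ((differentiable_const (1:ℂ)).differentiableOn.sub
        ((differentiable_id.const_mul _).differentiableOn))
    · intro z hz
      exact one_sub_ne (by rwa [RCLike.norm_conj]) ((hmem z).1 hz)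
  have hσm : Set.MapsTo σ (ball (0:ℂ) 1) (ball (0:ℂ) 1) := by
    intro z hz
    rw [hmem]
    exact moebius_lt_one hp ((hmem z).1 hz)
  have hσσ : ∀ z ∈ ball (0:ℂ) 1, σ (σ z) = z := by
    intro z hz
    exact moebius_invol hp ((hmem z).1 hz)
  have hσ0 : σ 0 = p := by rw [hσdef]; simp
  have hpmem : p ∈ ball (0:ℂ) 1 := (hmem p).2 hp
  set g : ℂ → ℂ := fun z => φ (σ z) with hgdef
  have hgd : DifferentiableOn ℂ g (ball (0:ℂ) 1) := hφd.comp hσd hσm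
  have hg0 : g 0 = 0 := by rw [hgdef]; simp only [hσ0, hφp]
  have hgm : Set.MapsTo g (ball (0:ℂ) 1) (ball (0:ℂ) 1) := hφm.comp hσm
  set h : ℂ → ℂ := fun z => σ (ψ z) with hhdef
  have hhd : DifferentiableOn ℂ h (ball (0:ℂ) 1) := hσd.comp hψd hψm
  have hhm : Set.MapsTo h (ball (0:ℂ) 1) (ball (0:ℂ) 1) := hσm.comp hψm
  have hhg : ∀ z ∈ ball (0:ℂ) 1, h (g z) = z := by
    intro z hz
    rw [hgdef, hhdef]
    simp only
    rw [hψφ (σ z) (hσm hz), hσσ z hz]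
  have hh0 : h 0 = 0 := by
    have := hhg 0 (by simp)
    rwa [hg0] at this
  have hzero : (0:ℂ) ∈ ball (0:ℂ) 1 := by simp
  have habs : ∀ z ∈ ball (0:ℂ) 1, ‖g z‖ = ‖z‖ := by
    intro z hz
    have hz1 : ‖z‖ < 1 := (hmem z).1 hz
    have le1 : ‖g z‖ ≤ ‖z‖ :=
      Complex.norm_le_norm_of_mapsTo_ball hgd (hgm.mono_right ball_subset_closedBall) hg0 hz1
    have hgz1 : ‖g z‖ < 1 := (hmem _).1 (hgm hz)
    have le2 : ‖h (g z)‖ ≤ ‖g z‖ :=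
      Complex.norm_le_norm_of_mapsTo_ball hhd (hhm.mono_right ball_subset_closedBall) hh0 hgz1
    rw [hhg z hz] at le2
    exact le_antisymm le1 (le2)
  -- rigidity
  have hhalf : (1/2 : ℂ) ∈ ball (0:ℂ) 1 := by rw [hmem]; simp; norm_num
  have hds : ‖dslope g 0 (1/2 : ℂ)‖ = 1 / 1 := by
    rw [dslope_of_ne _ (by norm_num : (1/2:ℂ) ≠ 0), slope_def_field]
    rw [norm_div]
    rw [hg0, sub_zero, sub_zero, habs (1/2) hhalf]
    simp [div_self]
  have hgm' : Set.MapsTo g (ball (0:ℂ) 1) (ball (g 0) 1) := by rwa [hg0]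
  have heq := Complex.affine_of_mapsTo_ball_of_exists_norm_dslope_eq_div
    hgd (hgm'.mono_right ball_subset_closedBall) hhalf hds
  set lam : ℂ := dslope g 0 (1/2 : ℂ) with hlamdef
  have hlamn : ‖lam‖ = 1 := hds.trans (by norm_num)
  refine ⟨lam, hlamn, ?_⟩
  intro z hz
  have hz1 : ‖z‖ < 1 := (hmem z).1 hz
  have hσz : σ z ∈ ball (0:ℂ) 1 := hσm hz
  have h1 : g (σ z) = lam * σ z := by
    have := heq hσz
    simp only [hg0, zero_add, sub_zero, smul_eq_mul] at this
    rw [this, mul_comm]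
  have h2 : φ z = lam * σ z := by
    have h3 : φ (σ (σ z)) = lam * σ z := h1
    rwa [hσσ z hz] at h3
  rw [h2, hσdef]
  have d1 : (1:ℂ) - (starRingEnd ℂ) p * z ≠ 0 := one_sub_ne (by rwa [RCLike.norm_conj]) hz1
  field_simp
  exact mul_div_cancel_right₀ _ (by rw [mul_comm]; exact d1)

lemma hardy_zero (z : ℂ) : hardyFun 0 z = 0 := by
  rw [hardyFun]
  convert tsum_zero with n
  simp

open ContinuousLinearMap in
lemma backward_dir {φ u : ℂ → ℂ} {W : ell2 →L[ℂ] ell2}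
    (hφd : DifferentiableOn ℂ φ (ball (0 : ℂ) 1))
    (hφm : Set.MapsTo φ (ball (0 : ℂ) 1) (ball (0 : ℂ) 1))
    (hW : ∀ a : ell2, ∀ z ∈ ball (0 : ℂ) 1, hardyFun (W a) z = u z * hardyFun a (φ z))
    (hR : (∃ ψ : ℂ → ℂ, DifferentiableOn ℂ ψ (ball (0 : ℂ) 1) ∧
        Set.MapsTo ψ (ball (0 : ℂ) 1) (ball (0 : ℂ) 1) ∧
        (∀ z ∈ ball (0 : ℂ) 1, ψ (φ z) = z) ∧
        (∀ z ∈ ball (0 : ℂ) 1, φ (ψ z) = z)) ∧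
     ∃ p : ℂ, ∃ c : ℂ, ‖p‖ < 1 ∧ φ p = 0 ∧ ‖c‖ = 1 ∧
       ∀ z ∈ ball (0 : ℂ) 1,
         u z = c * (Real.sqrt (1 - ‖p‖ ^ 2) : ℝ) / (1 - (starRingEnd ℂ) p * z)) :
    (∀ a b : ell2, (inner ℂ (W a) (W b) : ℂ) = inner ℂ a b) ∧ Function.Surjective W := by
  obtain ⟨⟨ψ, hψd, hψm, hψφ, hφψ⟩, p, c, hp, hφp, hc, hu⟩ := hR
  have hmem : ∀ z : ℂ, z ∈ ball (0:ℂ) 1 ↔ ‖z‖ < 1 := by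
    intro z; simp [mem_ball, dist_eq_norm]
  obtain ⟨lam, hlamn, hrig⟩ := schwarz_rigid hφd hφm hψd hψm hψφ hp hφp
  set s : ℂ := ((Real.sqrt (1 - ‖p‖^2) : ℝ) : ℂ) with hsdef
  have hppos : (0:ℝ) < 1 - ‖p‖^2 := by nlinarith [norm_nonneg p]
  have hsne : s ≠ 0 := by
    rw [hsdef]
    simp only [ne_eq, Complex.ofReal_eq_zero]
    positivity
  have hss : s * s = 1 - p * (starRingEnd ℂ) p := by
    rw [hsdef, ← Complex.ofReal_mul, Real.mul_self_sqrt hppos.le]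
    rw [Complex.ofReal_sub, Complex.ofReal_one, Complex.ofReal_pow]
    congr 1
    rw [Complex.mul_conj, Complex.normSq_eq_norm_sq]
    push_cast
    ring
  have hcc : c * (starRingEnd ℂ) c = 1 := by
    rw [Complex.mul_conj, Complex.normSq_eq_norm_sq, hc]
    norm_num
  have hlamc : lam * (starRingEnd ℂ) lam = 1 := by
    rw [Complex.mul_conj, Complex.normSq_eq_norm_sq, hlamn]
    norm_num
  have hcne : c ≠ 0 := by
    intro h; rw [h, norm_zero] at hc; norm_num at hc
  have huz : ∀ z ∈ ball (0:ℂ) 1, u z ≠ 0 := by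
    intro z hz
    rw [hu z hz]
    have dz : (1:ℂ) - (starRingEnd ℂ) p * z ≠ 0 :=
      one_sub_ne (by rwa [RCLike.norm_conj]) ((hmem z).1 hz)
    exact div_ne_zero (mul_ne_zero hcne hsne) dz
  -- the fundamental scalar identity
  have hstar : ∀ z ∈ ball (0:ℂ) 1, ∀ w ∈ ball (0:ℂ) 1,
      u z * (starRingEnd ℂ) (u w) * (1 - z * (starRingEnd ℂ) w)
        = 1 - φ z * (starRingEnd ℂ) (φ w) := by
    intro z hz w hw
    have hz1 : ‖z‖ < 1 := (hmem z).1 hz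
    have hw1 : ‖w‖ < 1 := (hmem w).1 hw
    have dz : (1:ℂ) - (starRingEnd ℂ) p * z ≠ 0 :=
      one_sub_ne (by rwa [RCLike.norm_conj]) hz1
    have dw : (1:ℂ) - p * (starRingEnd ℂ) w ≠ 0 :=
      one_sub_ne hp (by rwa [RCLike.norm_conj])
    have Lz : u z * (1 - (starRingEnd ℂ) p * z) = c * s := by
      rw [hu z hz, div_mul_cancel₀ _ dz]
    have dw' : (1:ℂ) - (starRingEnd ℂ) p * w ≠ 0 :=
      one_sub_ne (by rwa [RCLike.norm_conj]) hw1
    have Lw : (starRingEnd ℂ) (u w) * (1 - p * (starRingEnd ℂ) w)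
        = (starRingEnd ℂ) c * s := by
      have h0 : u w * (1 - (starRingEnd ℂ) p * w) = c * s := by
        rw [hu w hw, div_mul_cancel₀ _ dw']
      have h1 := congrArg (starRingEnd ℂ) h0
      simp only [map_mul, map_sub, map_one, Complex.conj_conj] at h1
      rwa [hsdef, Complex.conj_ofReal, ← hsdef] at h1
    have hrw : (starRingEnd ℂ) (φ w) * (1 - p * (starRingEnd ℂ) w)
        = (starRingEnd ℂ) lam * ((starRingEnd ℂ) p - (starRingEnd ℂ) w) := by
      have h1 := congrArg (starRingEnd ℂ) (hrig w hw)
      simpa [map_mul, map_sub, map_one, Complex.conj_conj] using h1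
    have hG : (u z * (starRingEnd ℂ) (u w) * (1 - z * (starRingEnd ℂ) w))
          * ((1 - (starRingEnd ℂ) p * z) * (1 - p * (starRingEnd ℂ) w))
        = (1 - φ z * (starRingEnd ℂ) (φ w))
          * ((1 - (starRingEnd ℂ) p * z) * (1 - p * (starRingEnd ℂ) w)) := by
      linear_combination
        ((starRingEnd ℂ) (u w) * (1 - p * (starRingEnd ℂ) w) * (1 - z * (starRingEnd ℂ) w)) * Lz
        + (c * s * (1 - z * (starRingEnd ℂ) w)) * Lw
        + (s * s * (1 - z * (starRingEnd ℂ) w)) * hcc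
        + (1 - z * (starRingEnd ℂ) w) * hss
        + ((starRingEnd ℂ) (φ w) * (1 - p * (starRingEnd ℂ) w)) * hrig z hz
        + (lam * (p - z)) * hrw
        + ((p - z) * ((starRingEnd ℂ) p - (starRingEnd ℂ) w)) * hlamc
    exact mul_right_cancel₀ (mul_ne_zero dz dw) hG
  -- inner products of adjoint images of kernels
  have hTkk : ∀ z ∈ ball (0:ℂ) 1, ∀ w ∈ ball (0:ℂ) 1,
      (inner ℂ (adjoint W (kern z)) (adjoint W (kern w)) : ℂ) = inner ℂ (kern z) (kern w) := by
    intro z hz w hw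
    have hz1 : ‖z‖ < 1 := (hmem z).1 hz
    have hw1 : ‖w‖ < 1 := (hmem w).1 hw
    have hφz : ‖φ z‖ < 1 := (hmem _).1 (hφm hz)
    have hφw : ‖φ w‖ < 1 := (hmem _).1 (hφm hw)
    rw [adj_kern hφm hW hz, adj_kern hφm hW hw, inner_smul_left, inner_smul_right,
      inner_kern_kern hφz hφw, inner_kern_kern hz1 hw1]
    simp only [Complex.conj_conj]
    have hD1 : (1 : ℂ) - φ z * (starRingEnd ℂ) (φ w) ≠ 0 :=
      one_sub_ne hφz (by rwa [RCLike.norm_conj])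
    have hD2 : (1 : ℂ) - z * (starRingEnd ℂ) w ≠ 0 :=
      one_sub_ne hz1 (by rwa [RCLike.norm_conj])
    field_simp
    linear_combination hstar z hz w hw
  -- W ∘ W† = 1
  have hWWtk : ∀ z ∈ ball (0:ℂ) 1, W (adjoint W (kern z)) = kern z := by
    intro z hz
    have hv : ∀ w ∈ ball (0:ℂ) 1,
        (inner ℂ (kern w) (W (adjoint W (kern z)) - kern z) : ℂ) = 0 := by
      intro w hw
      rw [inner_sub_right]
      have h1 : (inner ℂ (kern w) (W (adjoint W (kern z))) : ℂ)
          = inner ℂ (adjoint W (kern w)) (adjoint W (kern z)) := by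
        rw [adjoint_inner_left]
      rw [h1, hTkk w hw z hz, sub_self]
    have h2 : W (adjoint W (kern z)) - kern z = 0 := by
      apply eq_zero_of_hardy_eq_zero
      intro w hw
      rw [← inner_kern_left ((hmem w).1 hw)]
      exact hv w hw
    linear_combination (norm := module) h2
  have hWWt : ∀ x : ell2, W (adjoint W x) = x := by
    intro x
    have h2 : W (adjoint W x) - x = 0 := by
      apply eq_zero_of_hardy_eq_zero
      intro z hz
      rw [← inner_kern_left ((hmem z).1 hz), inner_sub_right]
      have h1 : (inner ℂ (kern z) (W (adjoint W x)) : ℂ)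
          = inner ℂ (adjoint W (kern z)) (adjoint W x) := by
        rw [adjoint_inner_left]
      rw [h1, adjoint_inner_right, hWWtk z hz, sub_self]
    linear_combination (norm := module) h2
  have hsurj : Function.Surjective W := fun x => ⟨adjoint W x, hWWt x⟩
  -- injectivity of W
  have hinj : ∀ a : ell2, W a = 0 → a = 0 := by
    intro a ha
    apply eq_zero_of_hardy_eq_zero
    intro ζ hζ
    have hψζ : ψ ζ ∈ ball (0:ℂ) 1 := hψm hζ
    have h1 := hW a (ψ ζ) hψζ
    rw [ha, hardy_zero] at h1
    have h2 : hardyFun a (φ (ψ ζ)) = 0 :=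
      (mul_eq_zero.1 h1.symm).resolve_left (huz (ψ ζ) hψζ)
    rwa [hφψ ζ hζ] at h2
  have hWtW : ∀ a : ell2, adjoint W (W a) = a := by
    intro a
    have h0 : W (adjoint W (W a) - a) = 0 := by
      rw [map_sub, hWWt (W a), sub_self]
    have h2 := hinj _ h0
    linear_combination (norm := module) h2
  refine ⟨fun a b => ?_, hsurj⟩
  rw [← adjoint_inner_left, hWtW]

theorem weighted_composition_unitary_iff
    (φ : ℂ → ℂ) (u : ℂ → ℂ)
    (hφd : DifferentiableOn ℂ φ (ball (0 : ℂ) 1))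
    (hφm : Set.MapsTo φ (ball (0 : ℂ) 1) (ball (0 : ℂ) 1))
    (hud : DifferentiableOn ℂ u (ball (0 : ℂ) 1))
    (hu0 : ∃ z ∈ ball (0 : ℂ) 1, u z ≠ 0)
    (W : ell2 →L[ℂ] ell2)
    (hW : ∀ a : ell2, ∀ z ∈ ball (0 : ℂ) 1, hardyFun (W a) z = u z * hardyFun a (φ z)) :
    ((∀ a b : ell2, (inner ℂ (W a) (W b) : ℂ) = inner ℂ a b) ∧ Function.Surjective W) ↔
      ((∃ ψ : ℂ → ℂ, DifferentiableOn ℂ ψ (ball (0 : ℂ) 1) ∧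
          Set.MapsTo ψ (ball (0 : ℂ) 1) (ball (0 : ℂ) 1) ∧
          (∀ z ∈ ball (0 : ℂ) 1, ψ (φ z) = z) ∧
          (∀ z ∈ ball (0 : ℂ) 1, φ (ψ z) = z)) ∧
       ∃ p : ℂ, ∃ c : ℂ, ‖p‖ < 1 ∧ φ p = 0 ∧ ‖c‖ = 1 ∧
         ∀ z ∈ ball (0 : ℂ) 1,
           u z = c * (Real.sqrt (1 - ‖p‖ ^ 2) : ℝ) / (1 - (starRingEnd ℂ) p * z)) := by
  constructor
  · rintro ⟨h1, h2⟩
    exact forward_dir hφm hW h1 h2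
  · intro hR
    exact backward_dir hφd hφm hW hR
end
end
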